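/- arXiv:1703.07097 — 2 statements merged into one kernel-verified Lean document; each statement's English description precedes it below -/
import Mathlib

section
/- Let n ≥ 3 be odd, so that the bipyramid BP_n is z-knotted. Then every edge of BP_n joining a vertex of {a,b} to a vertex of {1,…,n} is of first type, and every edge of the n-gon (an edge {i, i+1 mod n}) is of second type. Consequently every face of BP_n is a (1,1,2)-face, its unique edge of second type being its n-gon edge. -/
universe u v

/-- The data of an embedded graph: a simple graph together with a collection of
(triangular) faces, each face recorded as the finite set of its vertices. -/
structure PreTriangulation (V : Type u) where
  graph : SimpleGraph V
  faces : Set (Finset V)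

namespace PreTriangulation

variable {V : Type u} {V' : Type v}

/-- `T` is a combinatorial triangulation: a finite simple connected graph together with
a collection of faces, each face being a set of three pairwise adjacent vertices, such that
every edge lies in exactly two faces and two distinct faces share at most one edge. -/
structure IsTriangulation [DecidableEq V] (T : PreTriangulation V) : Prop where
  finiteVerts : Finite V
  connected : T.graph.Connected
  face_card : ∀ F ∈ T.faces, F.card = 3
  face_adj : ∀ F ∈ T.faces, ∀ x ∈ F, ∀ y ∈ F, x ≠ y → T.graph.Adj x y
  edge_in_two_faces : ∀ x y : V, T.graph.Adj x y →
    {F | F ∈ T.faces ∧ x ∈ F ∧ y ∈ F}.ncard = 2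
  faces_share_at_most_one_edge :
    ∀ F ∈ T.faces, ∀ G ∈ T.faces, F ≠ G → (F ∩ G).card ≤ 2

section

variable [DecidableEq V] [DecidableEq V']

/-- A zigzag in `T`: a cyclic sequence of vertices (encoded as a periodic function `ℤ → V`
whose minimal period `n` is the length of the zigzag, with `n > 3`) such that any two
consecutive vertices are distinct and adjacent, any three consecutive vertices lie in a
unique face, and the faces determined by two consecutive triples are distinct. -/
structure Zigzag (T : PreTriangulation V) where
  n : ℕ
  three_lt_n : 3 < n
  seq : ℤ → V
  periodic : ∀ i : ℤ, seq (i + n) = seq i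
  n_minimal : ∀ m : ℕ, 0 < m → (∀ i : ℤ, seq (i + m) = seq i) → n ≤ m
  seq_ne : ∀ i : ℤ, seq i ≠ seq (i + 1)
  seq_adj : ∀ i : ℤ, T.graph.Adj (seq i) (seq (i + 1))
  face : ℤ → Finset V
  face_mem : ∀ i : ℤ, face i ∈ T.faces
  subset_face : ∀ i : ℤ, ({seq i, seq (i + 1), seq (i + 2)} : Finset V) ⊆ face i
  face_unique : ∀ i : ℤ, ∀ G ∈ T.faces,
    ({seq i, seq (i + 1), seq (i + 2)} : Finset V) ⊆ G → G = face i
  face_ne : ∀ i : ℤ, face i ≠ face (i + 1)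

variable {T : PreTriangulation V}

/-- Two zigzags are equivalent if they agree up to a cyclic shift or up to a cyclic
shift combined with reversal. -/
def ZigzagEquiv (Z Z' : T.Zigzag) : Prop :=
  (∃ k : ℤ, ∀ i : ℤ, Z'.seq i = Z.seq (i + k)) ∨
  (∃ k : ℤ, ∀ i : ℤ, Z'.seq i = Z.seq (k - i))

/-- `T` is z-knotted: it has exactly one zigzag up to cyclic shift and reversal. -/
def ZKnotted (T : PreTriangulation V) [DecidableEq V] : Prop :=
  Nonempty T.Zigzag ∧ ∀ Z Z' : T.Zigzag, ZigzagEquiv Z Z'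

/-- `T` has exactly two zigzags up to cyclic shift and reversal. -/
def HasExactlyTwoZigzags (T : PreTriangulation V) [DecidableEq V] : Prop :=
  ∃ Z₁ Z₂ : T.Zigzag, ¬ ZigzagEquiv Z₁ Z₂ ∧
    ∀ Z : T.Zigzag, ZigzagEquiv Z Z₁ ∨ ZigzagEquiv Z Z₂

/-- `T` has exactly three zigzags up to cyclic shift and reversal. -/
def HasExactlyThreeZigzags (T : PreTriangulation V) [DecidableEq V] : Prop :=
  ∃ Z₁ Z₂ Z₃ : T.Zigzag, ¬ ZigzagEquiv Z₁ Z₂ ∧ ¬ ZigzagEquiv Z₁ Z₃ ∧ ¬ ZigzagEquiv Z₂ Z₃ ∧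
    ∀ Z : T.Zigzag, ZigzagEquiv Z Z₁ ∨ ZigzagEquiv Z Z₂ ∨ ZigzagEquiv Z Z₃

namespace Zigzag

/-- The zigzag passes from `x` to `y` (in this order) at some position. -/
def Passes (Z : T.Zigzag) (x y : V) : Prop :=
  ∃ i : ℤ, Z.seq i = x ∧ Z.seq (i + 1) = y

/-- The zigzag passes from `x` to `y` (in this order) at two distinct positions
of the cyclic sequence. -/
def PassesTwice (Z : T.Zigzag) (x y : V) : Prop :=
  ∃ i j : ℤ, (i : ZMod Z.n) ≠ (j : ZMod Z.n) ∧
    Z.seq i = x ∧ Z.seq (i + 1) = y ∧ Z.seq j = x ∧ Z.seq (j + 1) = y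

/-- The edge `{x, y}` is of first type: the zigzag contains both `x, y` and `y, x`
as pairs of consecutive vertices. -/
def FirstTypeEdge (Z : T.Zigzag) (x y : V) : Prop := Z.Passes x y ∧ Z.Passes y x

/-- The edge `{x, y}` is of second type: the zigzag contains the same ordered pair
(`x, y` or `y, x`) twice. -/
def SecondTypeEdge (Z : T.Zigzag) (x y : V) : Prop :=
  Z.PassesTwice x y ∨ Z.PassesTwice y x

/-- The number of positions of the cyclic sequence at which the pair of consecutive
vertices equals `{x, y}` (in either order). -/
noncomputable def passCount (Z : T.Zigzag) (x y : V) : ℕ :=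
  Nat.card {i : Fin Z.n //
    (Z.seq ((i : ℕ) : ℤ) = x ∧ Z.seq (((i : ℕ) : ℤ) + 1) = y) ∨
    (Z.seq ((i : ℕ) : ℤ) = y ∧ Z.seq (((i : ℕ) : ℤ) + 1) = x)}

/-- The number of positions of the cyclic sequence at which the triple of consecutive
vertices has vertex set equal to `F`. -/
noncomputable def faceCount (Z : T.Zigzag) (F : Finset V) : ℕ :=
  Nat.card {i : Fin Z.n //
    ({Z.seq ((i : ℕ) : ℤ), Z.seq (((i : ℕ) : ℤ) + 1), Z.seq (((i : ℕ) : ℤ) + 2)} :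
      Finset V) = F}

/-- The three consecutive vertices of the zigzag at position `i` are `x, y, z`. -/
def TripleAt (Z : T.Zigzag) (i : ℤ) (x y z : V) : Prop :=
  Z.seq i = x ∧ Z.seq (i + 1) = y ∧ Z.seq (i + 2) = z

/-- The zigzag has the cyclic form `x₁,y₁,z₁, …, x₂,y₂,z₂, …, x₃,y₃,z₃, …`:
the three triples occur in this cyclic order within one period. -/
def CyclicTriples (Z : T.Zigzag) (x₁ y₁ z₁ x₂ y₂ z₂ x₃ y₃ z₃ : V) : Prop :=
  ∃ (i : ℤ) (p q : ℕ), 0 < p ∧ p < q ∧ q < Z.n ∧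
    Z.TripleAt i x₁ y₁ z₁ ∧ Z.TripleAt (i + p) x₂ y₂ z₂ ∧ Z.TripleAt (i + q) x₃ y₃ z₃

/-- `F` is a `(1,1,2)`-face: exactly one of its three edges is of second type. -/
def Is112Face (Z : T.Zigzag) (F : Finset V) : Prop :=
  ∃ x y z : V, F = {x, y, z} ∧ x ≠ y ∧ x ≠ z ∧ y ≠ z ∧
    Z.SecondTypeEdge y z ∧ ¬ Z.SecondTypeEdge x y ∧ ¬ Z.SecondTypeEdge x z

/-- `F` is a `(2,2,2)`-face: all three of its edges are of second type. -/
def Is222Face (Z : T.Zigzag) (F : Finset V) : Prop :=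
  ∃ x y z : V, F = {x, y, z} ∧ x ≠ y ∧ x ≠ z ∧ y ≠ z ∧
    Z.SecondTypeEdge x y ∧ Z.SecondTypeEdge y z ∧ Z.SecondTypeEdge x z

/-- `F` is a `(1,1,2)`-face of odd type: with vertices `x, y, z`, where `{y, z}` is the
edge of second type and the zigzag twice passes from `y` to `z`, the zigzag has the
cyclic form `x,y,z, …, y,x,z, …, y,z,x, …`. -/
def Is112OddFace (Z : T.Zigzag) (F : Finset V) : Prop :=
  ∃ x y z : V, F = {x, y, z} ∧ x ≠ y ∧ x ≠ z ∧ y ≠ z ∧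
    Z.SecondTypeEdge y z ∧ ¬ Z.SecondTypeEdge x y ∧ ¬ Z.SecondTypeEdge x z ∧
    Z.PassesTwice y z ∧ Z.CyclicTriples x y z y x z y z x

/-- `F` is a `(1,1,2)`-face of even type: with vertices `x, y, z`, where `{y, z}` is the
edge of second type and the zigzag twice passes from `y` to `z`, the zigzag has the
cyclic form `x,y,z, …, y,z,x, …, y,x,z, …`. -/
def Is112EvenFace (Z : T.Zigzag) (F : Finset V) : Prop :=
  ∃ x y z : V, F = {x, y, z} ∧ x ≠ y ∧ x ≠ z ∧ y ≠ z ∧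
    Z.SecondTypeEdge y z ∧ ¬ Z.SecondTypeEdge x y ∧ ¬ Z.SecondTypeEdge x z ∧
    Z.PassesTwice y z ∧ Z.CyclicTriples x y z y z x y x z

/-- `F` is a `(2,2,2)`-face of first type: with vertices `x, y, z` such that the zigzag
twice passes from `x` to `y`, twice from `y` to `z` and twice from `z` to `x`, the
zigzag has the cyclic form `x,y,z, …, z,x,y, …, y,z,x, …`. -/
def Is222FirstFace (Z : T.Zigzag) (F : Finset V) : Prop :=
  ∃ x y z : V, F = {x, y, z} ∧ x ≠ y ∧ x ≠ z ∧ y ≠ z ∧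
    Z.PassesTwice x y ∧ Z.PassesTwice y z ∧ Z.PassesTwice z x ∧
    Z.CyclicTriples x y z z x y y z x

/-- `F` is a `(2,2,2)`-face of second type: with vertices `x, y, z` such that the zigzag
twice passes from `x` to `y`, twice from `y` to `z` and twice from `z` to `x`, the
zigzag has the cyclic form `x,y,z, …, y,z,x, …, z,x,y, …`. -/
def Is222SecondFace (Z : T.Zigzag) (F : Finset V) : Prop :=
  ∃ x y z : V, F = {x, y, z} ∧ x ≠ y ∧ x ≠ z ∧ y ≠ z ∧
    Z.PassesTwice x y ∧ Z.PassesTwice y z ∧ Z.PassesTwice z x ∧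
    Z.CyclicTriples x y z y z x z x y

/-- `a` is the vertex of the face `F` which does not lie on an edge of `F` of
second type. -/
def IsApex (Z : T.Zigzag) (F : Finset V) (a : V) : Prop :=
  a ∈ F ∧ ∀ y ∈ F, y ≠ a → ¬ Z.SecondTypeEdge a y

end Zigzag

end

section ConnectedSum

variable [DecidableEq V] [DecidableEq V']

/-- The map gluing `Γ'` onto `Γ`: a vertex of `F'` is sent to the corresponding
(under `g`) vertex of `F`, all other vertices of `Γ'` are kept. -/
noncomputable def glueMap [Nonempty V] (F : Finset V) (F' : Finset V') (g : V → V') (y : V') :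
    V ⊕ {y : V' // y ∉ F'} :=
  if h : y ∈ F' then Sum.inl (Function.invFunOn g ↑F y) else Sum.inr ⟨y, h⟩

/-- The connected sum `T #_g T'` of two triangulations along the faces `F` and `F'`,
via the identification `g` of the vertices of `F` with the vertices of `F'`:
the disjoint union of `T` and `T'` in which every vertex `v` of `F` is identified with
`g v` (and the edges of `F` are identified with the corresponding edges of `F'`),
whose faces are all faces of `T` other than `F` together with all faces of `T'`
other than `F'`. -/
noncomputable def connectedSum [Nonempty V] (T : PreTriangulation V) (T' : PreTriangulation V')
    (F : Finset V) (F' : Finset V') (g : V → V') :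
    PreTriangulation (V ⊕ {y : V' // y ∉ F'}) where
  graph :=
    { Adj := fun u v => u ≠ v ∧
        ((∃ x y : V, T.graph.Adj x y ∧ u = Sum.inl x ∧ v = Sum.inl y) ∨
         (∃ x y : V', T'.graph.Adj x y ∧ u = glueMap F F' g x ∧ v = glueMap F F' g y))
      symm := by
        constructor
        rintro u v ⟨hne, h⟩
        refine ⟨hne.symm, ?_⟩
        rcases h with ⟨x, y, hxy, hu, hv⟩ | ⟨x, y, hxy, hu, hv⟩
        · exact Or.inl ⟨y, x, hxy.symm, hv, hu⟩
        · exact Or.inr ⟨y, x, hxy.symm, hv, hu⟩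
      loopless := ⟨fun u h => h.1 rfl⟩ }
  faces :=
    {G | (∃ A ∈ T.faces, A ≠ F ∧ G = A.image Sum.inl) ∨
         (∃ A ∈ T'.faces, A ≠ F' ∧ G = A.image (glueMap F F' g))}

end ConnectedSum

/-- `T` and `T'` are isomorphic as graphs together with their collections of faces. -/
def IsIsoTo [DecidableEq V'] (T : PreTriangulation V) (T' : PreTriangulation V') : Prop :=
  ∃ e : V ≃ V', (∀ x y : V, T.graph.Adj x y ↔ T'.graph.Adj (e x) (e y)) ∧
    (∀ G : Finset V, G ∈ T.faces ↔ G.image e ∈ T'.faces)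

/-- The bipyramid `BP n`.  The two apices `a, b` are `Sum.inl true, Sum.inl false`;
the vertices `1, …, n` of the `n`-gon are `Sum.inr 0, …, Sum.inr (n-1)` (that is, the
paper's vertex `i` is `Sum.inr (i - 1)`). -/
def bp (n : ℕ) : PreTriangulation (Bool ⊕ ZMod n) where
  graph :=
    { Adj := fun u v =>
        match u, v with
        | Sum.inl _, Sum.inl _ => False
        | Sum.inl _, Sum.inr _ => True
        | Sum.inr _, Sum.inl _ => True
        | Sum.inr i, Sum.inr j => i ≠ j ∧ (j = i + 1 ∨ i = j + 1)
      symm := by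
        constructor
        rintro (s | i) (t | j) h
        · exact h.elim
        · trivial
        · trivial
        · exact ⟨h.1.symm, h.2.symm⟩
      loopless := by
        constructor
        rintro (s | i) h
        · exact h
        · exact h.1 rfl }
  faces := {G | ∃ (s : Bool) (i : ZMod n), G = {Sum.inl s, Sum.inr i, Sum.inr (i + 1)}}

/-- The complete graph on four vertices regarded as a combinatorial triangulation whose
faces are all four 3-element vertex subsets. -/
def k4 : PreTriangulation (Fin 4) where
  graph := ⊤
  faces := {G | G.card = 3}

/-- The cyclic sequence `a, 1+c, 2+c, b, 3+c, 4+c, …, a, n-1+c, n+c, b, 1+c, 2+c, a, 3+c, 4+c,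
…, b, n-1+c, n+c` in the bipyramid `BP n` (for `n` even), of length `3 n`, written in the
paper's labels; `c` is an offset.  Here `a = Sum.inl true`, `b = Sum.inl false` and the
paper's vertex `i` is `Sum.inr (i - 1)`. -/
def bpZigSeq (n : ℕ) (c : ZMod n) : ℤ → Bool ⊕ ZMod n := fun i =>
  let j : ℕ := (i % (3 * (n : ℤ))).toNat
  if j % 3 = 0 then Sum.inl (decide (j / 3 % 2 = 0))
  else Sum.inr (((2 * (j / 3) + (if j % 3 = 1 then 0 else 1) : ℕ) : ZMod n) + c)

end PreTriangulation

open PreTriangulation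

namespace BPAux

open PreTriangulation

variable {n : ℕ}

lemma zm_one_ne (h3 : 3 ≤ n) : (1 : ZMod n) ≠ 0 := by
  haveI : Fact (1 < n) := ⟨by omega⟩
  exact one_ne_zero

lemma zm_two_ne (h3 : 3 ≤ n) : (2 : ZMod n) ≠ 0 := by
  haveI : NeZero n := ⟨by omega⟩
  intro h
  have h2 : ((2:ℕ) : ZMod n) = 0 := by exact_mod_cast h
  rw [ZMod.natCast_eq_zero_iff] at h2
  have := Nat.le_of_dvd (by norm_num) h2
  omega

lemma mem_faces_pair (h3 : 3 ≤ n) (s₀ : Bool) (a e : ZMod n) (he : e = 1 ∨ e = -1) :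
    ({Sum.inl s₀, Sum.inr a, Sum.inr (a+e)} : Finset (Bool ⊕ ZMod n)) ∈ (bp n).faces := by
  rcases he with rfl | rfl
  · exact ⟨s₀, a, rfl⟩
  · refine ⟨s₀, a - 1, ?_⟩
    rw [sub_add_cancel, show a + (-1) = a - 1 by ring]
    rw [Finset.pair_comm]


lemma edge_two_faces (h3 : 3 ≤ n) (u v : Bool ⊕ ZMod n) (huv : (bp n).graph.Adj u v) :
    ∃ F G : Finset (Bool ⊕ ZMod n), F ∈ (bp n).faces ∧ G ∈ (bp n).faces ∧ F ≠ G ∧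
      u ∈ F ∧ v ∈ F ∧ u ∈ G ∧ v ∈ G ∧
      ∀ H ∈ (bp n).faces, u ∈ H → v ∈ H → H = F ∨ H = G := by
  have h1 := zm_one_ne h3
  have h2 := zm_two_ne h3
  rcases u with s | a <;> rcases v with t | b
  · exact huv.elim
  · -- u = inl s, v = inr b
    refine ⟨{Sum.inl s, Sum.inr (b-1), Sum.inr b}, {Sum.inl s, Sum.inr b, Sum.inr (b+1)},
      ⟨s, b-1, by rw [sub_add_cancel]⟩, ⟨s, b, rfl⟩, ?_, by simp, by simp, by simp, by simp, ?_⟩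
    · intro h
      have hm : (Sum.inr (b+1) : Bool ⊕ ZMod n) ∈
          ({Sum.inl s, Sum.inr (b-1), Sum.inr b} : Finset (Bool ⊕ ZMod n)) := by
        rw [h]; simp
      simp only [Finset.mem_insert, Finset.mem_singleton, Sum.inr.injEq, reduceCtorEq,
        false_or, or_false] at hm
      rcases hm with hm | hm
      · exact h2 (by linear_combination hm)
      · exact h1 (by linear_combination hm)
    · rintro H ⟨t', j, rfl⟩ hu hv
      simp only [Finset.mem_insert, Finset.mem_singleton, Sum.inl.injEq, Sum.inr.injEq,
        reduceCtorEq, or_false, false_or] at hu hv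
      subst hu
      rcases hv with rfl | rfl
      · right; rfl
      · left; rw [add_sub_cancel_right]
  · -- u = inr a, v = inl t
    refine ⟨{Sum.inl t, Sum.inr (a-1), Sum.inr a}, {Sum.inl t, Sum.inr a, Sum.inr (a+1)},
      ⟨t, a-1, by rw [sub_add_cancel]⟩, ⟨t, a, rfl⟩, ?_, by simp, by simp, by simp, by simp, ?_⟩
    · intro h
      have hm : (Sum.inr (a+1) : Bool ⊕ ZMod n) ∈
          ({Sum.inl t, Sum.inr (a-1), Sum.inr a} : Finset (Bool ⊕ ZMod n)) := by
        rw [h]; simp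
      simp only [Finset.mem_insert, Finset.mem_singleton, Sum.inr.injEq, reduceCtorEq,
        false_or, or_false] at hm
      rcases hm with hm | hm
      · exact h2 (by linear_combination hm)
      · exact h1 (by linear_combination hm)
    · rintro H ⟨t', j, rfl⟩ hu hv
      simp only [Finset.mem_insert, Finset.mem_singleton, Sum.inl.injEq, Sum.inr.injEq,
        reduceCtorEq, or_false, false_or] at hu hv
      subst hv
      rcases hu with rfl | rfl
      · right; rfl
      · left; rw [add_sub_cancel_right]
  · -- u = inr a, v = inr b
    obtain ⟨hab, hc⟩ := huv
    have key : ∀ a : ZMod n,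
        ∃ F G : Finset (Bool ⊕ ZMod n), F ∈ (bp n).faces ∧ G ∈ (bp n).faces ∧ F ≠ G ∧
        Sum.inr a ∈ F ∧ Sum.inr (a+1) ∈ F ∧ Sum.inr a ∈ G ∧ Sum.inr (a+1) ∈ G ∧
        ∀ H ∈ (bp n).faces, Sum.inr a ∈ H → Sum.inr (a+1) ∈ H → H = F ∨ H = G := by
      intro a
      refine ⟨{Sum.inl true, Sum.inr a, Sum.inr (a+1)}, {Sum.inl false, Sum.inr a, Sum.inr (a+1)},
        ⟨true, a, rfl⟩, ⟨false, a, rfl⟩, ?_, by simp, by simp, by simp, by simp, ?_⟩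
      · intro h
        have hm : (Sum.inl true : Bool ⊕ ZMod n) ∈
            ({Sum.inl false, Sum.inr a, Sum.inr (a+1)} : Finset (Bool ⊕ ZMod n)) := by
          rw [← h]; simp
        simp at hm
      · rintro H ⟨t', j, rfl⟩ hu hv
        simp only [Finset.mem_insert, Finset.mem_singleton, Sum.inr.injEq,
          reduceCtorEq, false_or] at hu hv
        rcases hu with rfl | hu
        · cases t'
          · right; rfl
          · left; rfl
        · exfalso
          rcases hv with hv | hv
          · exact h2 (by linear_combination hv - hu)
          · exact h1 (by linear_combination hv - hu)
    rcases hc with rfl | rfl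
    · exact key a
    · obtain ⟨F, G, hF, hG, hne, m1, m2, m3, m4, hu⟩ := key b
      exact ⟨F, G, hF, hG, hne, m2, m1, m4, m3, fun H h1 h2 h3 => hu H h1 h3 h2⟩

lemma two_apart (h3 : 3 ≤ n) (Z : (bp n).Zigzag) (i : ℤ) : Z.seq i ≠ Z.seq (i+2) := by
  intro h
  obtain ⟨F, G, hF, hG, hFG, uF, vF, uG, vG, -⟩ :=
    edge_two_faces h3 (Z.seq i) (Z.seq (i+1)) (Z.seq_adj i)
  have hsubF : ({Z.seq i, Z.seq (i+1), Z.seq (i+2)} : Finset (Bool ⊕ ZMod n)) ⊆ F := by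
    rw [Finset.insert_subset_iff, Finset.insert_subset_iff, Finset.singleton_subset_iff]
    exact ⟨uF, vF, h ▸ uF⟩
  have hsubG : ({Z.seq i, Z.seq (i+1), Z.seq (i+2)} : Finset (Bool ⊕ ZMod n)) ⊆ G := by
    rw [Finset.insert_subset_iff, Finset.insert_subset_iff, Finset.singleton_subset_iff]
    exact ⟨uG, vG, h ▸ uG⟩
  exact hFG ((Z.face_unique i F hF hsubF).trans (Z.face_unique i G hG hsubG).symm)

lemma next_face (h3 : 3 ≤ n) (Z : (bp n).Zigzag) (i : ℤ) (G : Finset (Bool ⊕ ZMod n))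
    (hG : G ∈ (bp n).faces) (hm1 : Z.seq (i+1) ∈ G) (hm2 : Z.seq (i+2) ∈ G)
    (hne : G ≠ Z.face i) : Z.face (i+1) = G ∧ Z.seq (i+3) ∈ G := by
  have e11 : i + 1 + 1 = i + 2 := by ring
  have e12 : i + 1 + 2 = i + 3 := by ring
  have hadj : (bp n).graph.Adj (Z.seq (i+1)) (Z.seq (i+2)) := by
    have := Z.seq_adj (i+1); rwa [e11] at this
  obtain ⟨F₀, G₀, hF₀, hG₀, hne₀, -, -, -, -, huniq⟩ :=
    edge_two_faces h3 (Z.seq (i+1)) (Z.seq (i+2)) hadj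
  have hsubi := Z.subset_face i
  have hsubi1 := Z.subset_face (i+1)
  rw [Finset.insert_subset_iff, Finset.insert_subset_iff, Finset.singleton_subset_iff]
    at hsubi hsubi1
  rw [e11, e12] at hsubi1
  have hfi := huniq (Z.face i) (Z.face_mem i) hsubi.2.1 hsubi.2.2
  have hfi1 := huniq (Z.face (i+1)) (Z.face_mem (i+1)) hsubi1.1 hsubi1.2.1
  have hGc := huniq G hG hm1 hm2
  have hff := Z.face_ne i
  have hkey : Z.face (i+1) = G := by
    rcases hfi with h | h <;> rcases hfi1 with h' | h' <;> rcases hGc with h'' | h'' <;>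
      first
        | (exact absurd (h.trans h'.symm) hff)
        | (exact absurd (h''.trans h.symm) hne)
        | (rw [h', h''])
  exact ⟨hkey, hkey ▸ hsubi1.2.2⟩

lemma after_inl (h3 : 3 ≤ n) (Z : (bp n).Zigzag) (i : ℤ) (s : Bool)
    (h : Z.seq i = Sum.inl s) :
    ∃ (m e : ZMod n), (e = 1 ∨ e = -1) ∧ Z.seq (i+1) = Sum.inr m ∧
      Z.seq (i+2) = Sum.inr (m+e) := by
  obtain ⟨t, j, hfj⟩ := Z.face_mem i
  have hsub := Z.subset_face i
  rw [Finset.insert_subset_iff, Finset.insert_subset_iff, Finset.singleton_subset_iff, hfj]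
    at hsub
  obtain ⟨h0, hs1, hs2⟩ := hsub
  rw [h] at h0
  simp only [Finset.mem_insert, Finset.mem_singleton, Sum.inl.injEq, reduceCtorEq,
    or_false, false_or] at h0
  subst h0
  have hne1 : Z.seq (i+1) ≠ Sum.inl s := fun hh => Z.seq_ne i (h.trans hh.symm)
  have hne2 : Z.seq (i+2) ≠ Sum.inl s := fun hh => two_apart h3 Z i (h.trans hh.symm)
  have hne12 : Z.seq (i+1) ≠ Z.seq (i+2) := by
    have := Z.seq_ne (i+1); rwa [show i+1+1 = i+2 by ring] at this
  simp only [Finset.mem_insert, Finset.mem_singleton] at hs1 hs2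
  rcases hs1 with hs1 | hs1 | hs1
  · exact absurd hs1 hne1
  · rcases hs2 with hs2 | hs2 | hs2
    · exact absurd hs2 hne2
    · exact absurd (hs1.trans hs2.symm) hne12
    · exact ⟨j, 1, Or.inl rfl, hs1, hs2⟩
  · rcases hs2 with hs2 | hs2 | hs2
    · exact absurd hs2 hne2
    · exact ⟨j+1, -1, Or.inr rfl, hs1, by rw [show j+1+(-1) = j by ring]; exact hs2⟩
    · exact absurd (hs1.trans hs2.symm) hne12

lemma e_facts (h3 : 3 ≤ n) {e : ZMod n} (he : e = 1 ∨ e = -1) :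
    e ≠ 0 ∧ e + e ≠ 0 := by
  have h1 := zm_one_ne h3
  have h2 := zm_two_ne h3
  rcases he with rfl | rfl
  · exact ⟨h1, fun h => h2 (by linear_combination h)⟩
  · exact ⟨fun h => h1 (by linear_combination -h), fun h => h2 (by linear_combination -h)⟩

lemma stepA (h3 : 3 ≤ n) (Z : (bp n).Zigzag) (i : ℤ) (s : Bool) (m e : ZMod n)
    (he : e = 1 ∨ e = -1)
    (h0 : Z.seq i = Sum.inl s) (h1 : Z.seq (i+1) = Sum.inr m)
    (h2 : Z.seq (i+2) = Sum.inr (m+e)) :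
    Z.seq (i+3) = Sum.inl (!s) ∧
      Z.face (i+1) = {Sum.inl (!s), Sum.inr m, Sum.inr (m+e)} := by
  have hGf := mem_faces_pair h3 (!s) m e he
  have hne : ({Sum.inl (!s), Sum.inr m, Sum.inr (m+e)} : Finset (Bool ⊕ ZMod n)) ≠
      Z.face i := by
    intro hEq
    have hm : Z.seq i ∈ Z.face i := Z.subset_face i (by simp)
    rw [h0] at hm
    have hm2 : (Sum.inl (!s) : Bool ⊕ ZMod n) ∈ Z.face i := hEq ▸ (by simp)
    obtain ⟨t, j, hface⟩ := Z.face_mem i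
    rw [hface] at hm hm2
    simp only [Finset.mem_insert, Finset.mem_singleton, Sum.inl.injEq, reduceCtorEq,
      or_false, false_or] at hm hm2
    rw [← hm] at hm2
    exact (Bool.not_ne_self s) hm2
  obtain ⟨hface1, hmem3⟩ := next_face h3 Z i _ hGf (by rw [h1]; simp) (by rw [h2]; simp) hne
  refine ⟨?_, hface1⟩
  have hne1 : Z.seq (i+3) ≠ Sum.inr (m+e) := by
    have := Z.seq_ne (i+2); rw [show i+2+1 = i+3 by ring] at this
    exact fun hh => this (h2.trans hh.symm)
  have hne2 : Z.seq (i+3) ≠ Sum.inr m := by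
    have := two_apart h3 Z (i+1); rw [show i+1+2 = i+3 by ring] at this
    exact fun hh => this (h1.trans hh.symm)
  simp only [Finset.mem_insert, Finset.mem_singleton] at hmem3
  rcases hmem3 with h | h | h
  · exact h
  · exact absurd h hne2
  · exact absurd h hne1

lemma stepB (h3 : 3 ≤ n) (Z : (bp n).Zigzag) (i : ℤ) (s : Bool) (m e : ZMod n)
    (he : e = 1 ∨ e = -1)
    (h1 : Z.seq (i+1) = Sum.inr m) (h2 : Z.seq (i+2) = Sum.inr (m+e))
    (h3' : Z.seq (i+3) = Sum.inl (!s))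
    (hf : Z.face (i+1) = {Sum.inl (!s), Sum.inr m, Sum.inr (m+e)}) :
    Z.seq (i+4) = Sum.inr (m+e+e) ∧
      Z.face (i+2) = {Sum.inl (!s), Sum.inr (m+e), Sum.inr (m+e+e)} := by
  obtain ⟨he0, h2e0⟩ := e_facts h3 he
  have hGf := mem_faces_pair h3 (!s) (m+e) e he
  have hne : ({Sum.inl (!s), Sum.inr (m+e), Sum.inr (m+e+e)} : Finset (Bool ⊕ ZMod n)) ≠
      Z.face (i+1) := by
    rw [hf]; intro hEq
    have hm : (Sum.inr (m+e+e) : Bool ⊕ ZMod n) ∈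
        ({Sum.inl (!s), Sum.inr m, Sum.inr (m+e)} : Finset (Bool ⊕ ZMod n)) := by
      rw [← hEq]; simp
    simp only [Finset.mem_insert, Finset.mem_singleton, Sum.inr.injEq, reduceCtorEq,
      false_or] at hm
    rcases hm with hm | hm
    · exact h2e0 (by linear_combination hm)
    · exact he0 (by linear_combination hm)
  have hnf := next_face h3 Z (i+1) _ hGf
    (by rw [show i+1+1 = i+2 by ring, h2]; simp)
    (by rw [show i+1+2 = i+3 by ring, h3']; simp) hne
  rw [show i+1+1 = i+2 by ring, show i+1+3 = i+4 by ring] at hnf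
  obtain ⟨hface2, hmem4⟩ := hnf
  refine ⟨?_, hface2⟩
  have hne1 : Z.seq (i+4) ≠ Sum.inl (!s) := by
    have := Z.seq_ne (i+3); rw [show i+3+1 = i+4 by ring] at this
    exact fun hh => this (h3'.trans hh.symm)
  have hne2 : Z.seq (i+4) ≠ Sum.inr (m+e) := by
    have := two_apart h3 Z (i+2); rw [show i+2+2 = i+4 by ring] at this
    exact fun hh => this (h2.trans hh.symm)
  simp only [Finset.mem_insert, Finset.mem_singleton] at hmem4
  rcases hmem4 with h | h | h
  · exact absurd h hne1
  · exact absurd h hne2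
  · exact h

lemma stepC (h3 : 3 ≤ n) (Z : (bp n).Zigzag) (i : ℤ) (s : Bool) (m e : ZMod n)
    (he : e = 1 ∨ e = -1)
    (h2 : Z.seq (i+2) = Sum.inr (m+e)) (h3' : Z.seq (i+3) = Sum.inl (!s))
    (h4 : Z.seq (i+4) = Sum.inr (m+e+e))
    (hf : Z.face (i+2) = {Sum.inl (!s), Sum.inr (m+e), Sum.inr (m+e+e)}) :
    Z.seq (i+5) = Sum.inr (m+e+e+e) := by
  obtain ⟨he0, h2e0⟩ := e_facts h3 he
  have hGf : ({Sum.inl (!s), Sum.inr (m+e+e), Sum.inr (m+e+e+e)} :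
      Finset (Bool ⊕ ZMod n)) ∈ (bp n).faces := mem_faces_pair h3 (!s) (m+e+e) e he
  have hne : ({Sum.inl (!s), Sum.inr (m+e+e), Sum.inr (m+e+e+e)} : Finset (Bool ⊕ ZMod n)) ≠
      Z.face (i+2) := by
    rw [hf]; intro hEq
    have hm : (Sum.inr (m+e+e+e) : Bool ⊕ ZMod n) ∈
        ({Sum.inl (!s), Sum.inr (m+e), Sum.inr (m+e+e)} : Finset (Bool ⊕ ZMod n)) := by
      rw [← hEq]; simp
    simp only [Finset.mem_insert, Finset.mem_singleton, Sum.inr.injEq, reduceCtorEq,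
      false_or] at hm
    rcases hm with hm | hm
    · exact h2e0 (by linear_combination hm)
    · exact he0 (by linear_combination hm)
  have hnf := next_face h3 Z (i+2) _ hGf
    (by rw [show i+2+1 = i+3 by ring, h3']; simp)
    (by rw [show i+2+2 = i+4 by ring, h4]; simp) hne
  rw [show i+2+3 = i+5 by ring] at hnf
  obtain ⟨-, hmem5⟩ := hnf
  have hne1 : Z.seq (i+5) ≠ Sum.inr (m+e+e) := by
    have := Z.seq_ne (i+4); rw [show i+4+1 = i+5 by ring] at this
    exact fun hh => this (h4.trans hh.symm)
  have hne2 : Z.seq (i+5) ≠ Sum.inl (!s) := by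
    have := two_apart h3 Z (i+3); rw [show i+3+2 = i+5 by ring] at this
    exact fun hh => this (h3'.trans hh.symm)
  simp only [Finset.mem_insert, Finset.mem_singleton] at hmem5
  rcases hmem5 with h | h | h
  · exact absurd h hne2
  · exact absurd h hne1
  · exact h

lemma macroStep (h3 : 3 ≤ n) (Z : (bp n).Zigzag) (i : ℤ) (s : Bool) (m e : ZMod n)
    (he : e = 1 ∨ e = -1)
    (h0 : Z.seq i = Sum.inl s) (h1 : Z.seq (i+1) = Sum.inr m)
    (h2 : Z.seq (i+2) = Sum.inr (m+e)) :
    Z.seq (i+3) = Sum.inl (!s) ∧ Z.seq (i+4) = Sum.inr (m+e+e) ∧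
      Z.seq (i+5) = Sum.inr (m+e+e+e) := by
  obtain ⟨ha, hfa⟩ := stepA h3 Z i s m e he h0 h1 h2
  obtain ⟨hb, hfb⟩ := stepB h3 Z i s m e he h1 h2 ha hfa
  exact ⟨ha, hb, stepC h3 Z i s m e he h2 ha hb hfb⟩

lemma half_exists (h3 : 3 ≤ n) (ho : Odd n) : ∃ u : ZMod n, 2 * u = 1 := by
  haveI : NeZero n := ⟨by omega⟩
  refine ⟨(((n+1)/2 : ℕ) : ZMod n), ?_⟩
  have hn2 : n % 2 = 1 := Nat.odd_iff.mp ho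
  have h : 2 * ((n+1)/2) = n + 1 := by omega
  calc (2 : ZMod n) * (((n+1)/2 : ℕ) : ZMod n) = ((2 * ((n+1)/2) : ℕ) : ZMod n) := by
        push_cast; ring
    _ = ((n + 1 : ℕ) : ZMod n) := by rw [h]
    _ = 1 := by push_cast [ZMod.natCast_self]; ring

lemma exists_k (h3 : 3 ≤ n) (ho : Odd n) (c : ZMod n) (j : ℕ) (hj : j < 2) :
    ∃ k : ℕ, (k : ZMod n) = c ∧ k % 2 = j := by
  haveI : NeZero n := ⟨by omega⟩
  have hn2 : n % 2 = 1 := Nat.odd_iff.mp ho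
  have hc : ((c.val : ℕ) : ZMod n) = c := (ZMod.natCast_val c).trans (ZMod.cast_id n c)
  by_cases h : c.val % 2 = j
  · exact ⟨c.val, hc, h⟩
  · refine ⟨c.val + n, ?_, by omega⟩
    push_cast [ZMod.natCast_self, hc]
    rw [← hc]; push_cast [ZMod.natCast_self]; ring

lemma dvd_two_n (h3 : 3 ≤ n) (ho : Odd n) {k k' : ℤ}
    (hres : ((k : ℤ) : ZMod n) = ((k' : ℤ) : ZMod n)) (hpar : k % 2 = k' % 2) :
    (2 * (n:ℤ)) ∣ k - k' := by
  have hn : (n:ℤ) ∣ k - k' := by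
    have hmod := (ZMod.intCast_eq_intCast_iff _ _ _).mp hres
    have hd : (n:ℤ) ∣ k' - k := Int.ModEq.dvd hmod
    have := dvd_neg.mpr hd
    rwa [neg_sub] at this
  have h2 : (2:ℤ) ∣ k - k' := by omega
  have hcopn : Nat.Coprime 2 n := by
    refine (Nat.prime_two.coprime_iff_not_dvd).mpr ?_
    have := Nat.odd_iff.mp ho; omega
  have hcop : IsCoprime (2:ℤ) (n:ℤ) := by
    have h22 : ((2:ℕ):ℤ) = (2:ℤ) := by norm_num
    rw [← h22]
    exact Int.isCoprime_iff_gcd_eq_one.mpr (by rw [Int.gcd_natCast_natCast]; exact hcopn)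
  exact hcop.mul_dvd h2 hn

end BPAux

theorem statement_6 (n : ℕ) (h3 : 3 ≤ n) (ho : Odd n) (Z : (bp n).Zigzag) :
    (∀ (s : Bool) (i : ZMod n),
      Z.FirstTypeEdge (Sum.inl s) (Sum.inr i) ∧
      ¬ Z.SecondTypeEdge (Sum.inl s) (Sum.inr i)) ∧
    (∀ i : ZMod n,
      Z.SecondTypeEdge (Sum.inr i) (Sum.inr (i + 1)) ∧
      ¬ Z.FirstTypeEdge (Sum.inr i) (Sum.inr (i + 1))) ∧
    (∀ F ∈ (bp n).faces, Z.Is112Face F ∧ ∃ (s : Bool) (i : ZMod n),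
      F = {Sum.inl s, Sum.inr i, Sum.inr (i + 1)} ∧
      Z.SecondTypeEdge (Sum.inr i) (Sum.inr (i + 1)) ∧
      ¬ Z.SecondTypeEdge (Sum.inl s) (Sum.inr i) ∧

      ¬ Z.SecondTypeEdge (Sum.inl s) (Sum.inr (i + 1))) := by
  classical
  haveI : NeZero n := ⟨by omega⟩
  have hn2 : n % 2 = 1 := Nat.odd_iff.mp ho
  open BPAux in
  -- find a position whose value is an apex
  have hex : ∃ (p : ℤ) (s₀ : Bool), Z.seq p = Sum.inl s₀ := by
    obtain ⟨t, j, hf0⟩ := Z.face_mem 0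
    have hsub := Z.subset_face 0
    rw [Finset.insert_subset_iff, Finset.insert_subset_iff, Finset.singleton_subset_iff,
      hf0] at hsub
    obtain ⟨hs0, hs1, hs2⟩ := hsub
    simp only [Finset.mem_insert, Finset.mem_singleton] at hs0 hs1 hs2
    have hne01 : Z.seq 0 ≠ Z.seq (0+1) := Z.seq_ne 0
    have hne12 : Z.seq (0+1) ≠ Z.seq (0+2) := by
      have := Z.seq_ne (0+1); rwa [show (0:ℤ)+1+1 = 0+2 by ring] at this
    have hne02 : Z.seq 0 ≠ Z.seq (0+2) := BPAux.two_apart h3 Z 0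
    rcases hs0 with h0|h0|h0
    · exact ⟨0, t, h0⟩
    · rcases hs1 with h1|h1|h1
      · exact ⟨0+1, t, h1⟩
      · exact absurd (h0.trans h1.symm) hne01
      · rcases hs2 with h2'|h2'|h2'
        · exact ⟨0+2, t, h2'⟩
        · exact absurd (h0.trans h2'.symm) hne02
        · exact absurd (h1.trans h2'.symm) hne12
    · rcases hs1 with h1|h1|h1
      · exact ⟨0+1, t, h1⟩
      · rcases hs2 with h2'|h2'|h2'
        · exact ⟨0+2, t, h2'⟩
        · exact absurd (h1.trans h2'.symm) hne12
        · exact absurd (h0.trans h2'.symm) hne02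
      · exact absurd (h0.trans h1.symm) hne01
  obtain ⟨p0, s0, hp0⟩ := hex
  obtain ⟨m, e, he, hm1, hm2⟩ := BPAux.after_inl h3 Z p0 s0 hp0
  -- the explicit formula, natural-number steps
  have hF : ∀ k : ℕ, Z.seq (p0 + 3*(k:ℤ)) = Sum.inl (if k % 2 = 0 then s0 else !s0) ∧
      Z.seq (p0 + 3*(k:ℤ) + 1) = Sum.inr (m + (e+e)*(k:ZMod n)) ∧
      Z.seq (p0 + 3*(k:ℤ) + 2) = Sum.inr (m + (e+e)*(k:ZMod n) + e) := by
    intro k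
    induction k with
    | zero =>
      refine ⟨?_, ?_, ?_⟩
      · simpa using hp0
      · simpa using hm1
      · simpa using hm2
    | succ k ih =>
      obtain ⟨a, b, c⟩ := ih
      obtain ⟨d1, d2, d3⟩ := BPAux.macroStep h3 Z (p0+3*(k:ℤ)) _ _ e he a b c
      have hq1 : p0 + 3*((k+1:ℕ):ℤ) = p0 + 3*(k:ℤ) + 3 := by push_cast; ring
      have hq2 : p0 + 3*((k+1:ℕ):ℤ) + 1 = p0 + 3*(k:ℤ) + 4 := by push_cast; ring
      have hq3 : p0 + 3*((k+1:ℕ):ℤ) + 2 = p0 + 3*(k:ℤ) + 5 := by push_cast; ring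
      refine ⟨?_, ?_, ?_⟩
      · rw [hq1, d1]
        congr 1
        by_cases hk : k % 2 = 0
        · have hk1 : (k+1) % 2 = 1 := by omega
          simp [hk, hk1]
        · have hk' : k % 2 = 1 := by omega
          have hk1 : (k+1) % 2 = 0 := by omega
          simp [hk', hk1]
      · rw [hq2, d2]
        congr 1
        push_cast; ring
      · rw [hq3, d3]
        congr 1
        push_cast; ring
  -- periodicity with period 6n
  have hcast2n : ∀ k : ℕ, (((k + 2*n : ℕ)) : ZMod n) = (k : ZMod n) := by
    intro k; push_cast [ZMod.natCast_self]; ring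
  have hper6 : ∀ x : ℤ, p0 ≤ x → Z.seq (x + 6*(n:ℤ)) = Z.seq x := by
    intro x hx
    obtain ⟨k, r, hqr, hr⟩ : ∃ k r : ℕ, x = p0 + 3*(k:ℤ) + (r:ℤ) ∧ r < 3 := by
      refine ⟨((x - p0).toNat)/3, ((x - p0).toNat) % 3, ?_, by omega⟩
      omega
    have hplus : x + 6*(n:ℤ) = p0 + 3*((k + 2*n : ℕ):ℤ) + (r:ℤ) := by push_cast; omega
    obtain ⟨a1, a2, a3⟩ := hF k
    obtain ⟨b1, b2, b3⟩ := hF (k + 2*n)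
    interval_cases r
    · rw [show (x:ℤ) + 6*(n:ℤ) = p0 + 3*((k + 2*n : ℕ):ℤ) from by push_cast at hplus ⊢; omega,
        show x = p0 + 3*(k:ℤ) from by push_cast at hqr ⊢; omega, a1, b1]
      congr 1
      have : (k + 2*n) % 2 = k % 2 := by omega
      rw [this]
    · rw [show (x:ℤ) + 6*(n:ℤ) = p0 + 3*((k + 2*n : ℕ):ℤ) + 1 from by push_cast at hplus ⊢; omega,
        show x = p0 + 3*(k:ℤ) + 1 from by push_cast at hqr ⊢; omega, a2, b2, hcast2n k]
    · rw [show (x:ℤ) + 6*(n:ℤ) = p0 + 3*((k + 2*n : ℕ):ℤ) + 2 from by push_cast at hplus ⊢; omega,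
        show x = p0 + 3*(k:ℤ) + 2 from by push_cast at hqr ⊢; omega, a3, b3, hcast2n k]
  have hZpos : 0 < Z.n := by have := Z.three_lt_n; omega
  have periter : ∀ (t : ℕ) (x : ℤ), Z.seq (x + (t:ℤ)*(Z.n:ℤ)) = Z.seq x := by
    intro t
    induction t with
    | zero => intro x; simpa using rfl
    | succ t ih =>
      intro x
      have : x + ((t+1:ℕ):ℤ)*(Z.n:ℤ) = (x + (t:ℤ)*(Z.n:ℤ)) + (Z.n:ℤ) := by push_cast; ring
      rw [this, Z.periodic, ih]
  have hper : ∀ x : ℤ, Z.seq (x + 6*(n:ℤ)) = Z.seq x := by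
    intro x
    set t : ℕ := (p0 - x).toNat with ht
    have h1 : p0 ≤ x + (t:ℤ)*(Z.n:ℤ) := by
      have : (t:ℤ) ≤ (t:ℤ)*(Z.n:ℤ) := by
        calc (t:ℤ) = (t:ℤ)*1 := by ring
        _ ≤ (t:ℤ)*(Z.n:ℤ) := by
            apply mul_le_mul_of_nonneg_left _ (by positivity)
            exact_mod_cast hZpos
      omega
    calc Z.seq (x + 6*(n:ℤ)) = Z.seq (x + 6*(n:ℤ) + (t:ℤ)*(Z.n:ℤ)) := (periter t _).symm
      _ = Z.seq (x + (t:ℤ)*(Z.n:ℤ) + 6*(n:ℤ)) := congrArg Z.seq (by ring)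
      _ = Z.seq (x + (t:ℤ)*(Z.n:ℤ)) := hper6 _ h1
      _ = Z.seq x := periter t x
  have hper6iter : ∀ (t : ℕ) (x : ℤ), Z.seq (x + (t:ℤ)*(6*(n:ℤ))) = Z.seq x := by
    intro t
    induction t with
    | zero => intro x; simpa using rfl
    | succ t ih =>
      intro x
      have : x + ((t+1:ℕ):ℤ)*(6*(n:ℤ)) = (x + (t:ℤ)*(6*(n:ℤ))) + 6*(n:ℤ) := by push_cast; ring
      rw [this, hper, ih]
  -- Z.n divides 6n
  have hdvd : Z.n ∣ 6*n := by
    have permul : ∀ (c p : ℤ), (∀ x : ℤ, Z.seq (x+p) = Z.seq x) →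
        ∀ x : ℤ, Z.seq (x + c*p) = Z.seq x := by
      intro c p hp
      induction c using Int.induction_on with
      | zero => intro x; simpa using rfl
      | succ c ih =>
        intro x
        have : x + ((c:ℤ)+1)*p = (x + c*p) + p := by ring
        rw [this, hp, ih]
      | pred c ih =>
        intro x
        have h' := hp (x + (-(c:ℤ)-1)*p)
        have e1 : x + (-(c:ℤ)-1)*p + p = x + (-(c:ℤ))*p := by ring
        rw [e1] at h'
        rw [← h', ih]
    set g : ℕ := Nat.gcd Z.n (6*n) with hg
    have hbez := Nat.gcd_eq_gcd_ab Z.n (6*n)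
    have hgper : ∀ x : ℤ, Z.seq (x + (g:ℤ)) = Z.seq x := by
      intro x
      have hsplit : x + (g:ℤ) = (x + (6*n:ℕ) * Nat.gcdB Z.n (6*n)) +
          (Nat.gcdA Z.n (6*n)) * (Z.n:ℤ) := by
        rw [hg]; push_cast [hbez]; push_cast; ring
      rw [hsplit, permul _ _ (fun y => Z.periodic y),
        show x + (6*n:ℕ) * Nat.gcdB Z.n (6*n) = x + (Nat.gcdB Z.n (6*n)) * (6*(n:ℤ)) from by
          push_cast; ring,
        permul _ _ hper]
    have hgpos : 0 < g := Nat.gcd_pos_of_pos_left _ hZpos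
    have hle := Z.n_minimal g hgpos hgper
    have hdl : g ∣ Z.n := Nat.gcd_dvd_left _ _
    have : g = Z.n := by
      have := Nat.le_of_dvd hZpos hdl
      omega
    rw [← this]
    exact Nat.gcd_dvd_right _ _
  -- in fact Z.n = 6n
  have hkey : ∀ x y : ZMod n, (e+e)*x = (e+e)*y → x = y := by
    obtain ⟨u, hu⟩ := BPAux.half_exists h3 ho
    have hee : e*e = 1 := by rcases he with rfl | rfl <;> norm_num
    intro x y hxy
    calc x = (2*u)*(e*e)*x := by rw [hu, hee]; ring
      _ = (u*e)*((e+e)*x) := by ring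
      _ = (u*e)*((e+e)*y) := by rw [hxy]
      _ = (2*u)*(e*e)*y := by ring
      _ = y := by rw [hu, hee]; ring
  have hZn : Z.n = 6*n := by
    obtain ⟨k, r, hqr, hr⟩ : ∃ k r : ℕ, Z.n = 3*k + r ∧ r < 3 := ⟨Z.n/3, Z.n % 3, by omega, by omega⟩
    obtain ⟨a1, a2, a3⟩ := hF k
    have hp := Z.periodic p0
    have hp1 := Z.periodic (p0+1)
    interval_cases r
    · rw [show p0 + (Z.n:ℤ) = p0 + 3*(k:ℤ) from by push_cast [hqr]; ring, a1, hp0] at hp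
      rw [show p0 + 1 + (Z.n:ℤ) = p0 + 3*(k:ℤ) + 1 from by push_cast [hqr]; ring, a2, hm1] at hp1
      simp only [Sum.inl.injEq, Sum.inr.injEq] at hp hp1
      -- hp : (if k % 2 = 0 then s0 else !s0) = s0 ; hp1 : m + (e+e)*k = m
      have hkeven : k % 2 = 0 := by
        by_contra hk
        rw [if_neg hk] at hp
        exact (Bool.not_ne_self s0) hp
      have hkres : ((k:ℕ) : ZMod n) = ((0:ℕ) : ZMod n) := by
        apply hkey
        push_cast
        linear_combination hp1
      rw [ZMod.natCast_eq_natCast_iff'] at hkres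
      simp only [Nat.zero_mod] at hkres
      -- n ∣ k
      have hnk : n ∣ k := Nat.dvd_of_mod_eq_zero hkres
      obtain ⟨t, ht⟩ := hnk
      have hkpos : 2 ≤ k := by have := Z.three_lt_n; omega
      have ht2 : 2 ∣ t := by
        have h2k : 2 ∣ k := by omega
        have hcop : Nat.Coprime 2 n := (Nat.prime_two.coprime_iff_not_dvd).mpr (by omega)
        refine hcop.dvd_of_dvd_mul_left (?_ : 2 ∣ n * t)
        rw [← ht]; exact h2k
      have hkle : k ≤ 2*n := by
        have h36 : 3*k ∣ 6*n := by rw [show 3*k = Z.n from by omega] ; exact hdvd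
        have := Nat.le_of_dvd (by omega) h36
        omega
      have htpos : 2 ≤ t := by
        rcases Nat.eq_zero_or_pos t with h | h
        · rw [h, Nat.mul_zero] at ht; omega
        · omega
      have hge : 2*n ≤ k := by
        calc 2*n = n*2 := by ring
          _ ≤ n*t := Nat.mul_le_mul_left n htpos
          _ = k := ht.symm
      omega
    · rw [show p0 + (Z.n:ℤ) = p0 + 3*(k:ℤ) + 1 from by push_cast [hqr]; ring, a2, hp0] at hp
      simp at hp
    · rw [show p0 + (Z.n:ℤ) = p0 + 3*(k:ℤ) + 2 from by push_cast [hqr]; ring, a3, hp0] at hp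
      simp at hp
  -- extend the formula to all integers
  have hFZ : ∀ k : ℤ, Z.seq (p0 + 3*k) = Sum.inl (if k % 2 = 0 then s0 else !s0) ∧
      Z.seq (p0 + 3*k + 1) = Sum.inr (m + (e+e)*((k:ℤ) : ZMod n)) ∧
      Z.seq (p0 + 3*k + 2) = Sum.inr (m + (e+e)*((k:ℤ) : ZMod n) + e) := by
    intro k
    set t : ℕ := k.natAbs with htdef
    have hn3 : (3:ℤ) ≤ (n:ℤ) := by exact_mod_cast h3
    have ht0 : (0:ℤ) ≤ (t:ℤ) := Int.natCast_nonneg t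
    have h1 : (t:ℤ) ≤ 2*(n:ℤ)*(t:ℤ) := by nlinarith
    have hge : 0 ≤ k + 2*(n:ℤ)*(t:ℤ) := by
      have habs : -(t:ℤ) ≤ k := by omega
      omega
    set K : ℕ := (k + 2*(n:ℤ)*(t:ℤ)).toNat with hKdef
    have hKk : (K:ℤ) = k + 2*(n:ℤ)*(t:ℤ) := Int.toNat_of_nonneg hge
    have hpar : (K:ℤ) % 2 = k % 2 := by
      rw [hKk, show k + 2*(n:ℤ)*(t:ℤ) = k + ((n:ℤ)*(t:ℤ))*2 from by ring]
      exact Int.add_mul_emod_self_right _ _ _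
    have hiff : (K % 2 = 0) ↔ (k % 2 = 0) := by omega
    have hvalK : ((K : ℕ) : ZMod n) = ((k : ℤ) : ZMod n) := by
      have h1 : (((K:ℕ)) : ZMod n) = (((K:ℤ)) : ZMod n) := (Int.cast_natCast K).symm
      rw [h1, hKk]
      push_cast [ZMod.natCast_self]
      ring
    have hpos1 : p0 + 3*(K:ℤ) = (p0 + 3*k) + (t:ℤ)*(6*(n:ℤ)) := by rw [hKk]; ring
    have hpos2 : p0 + 3*(K:ℤ) + 1 = (p0 + 3*k + 1) + (t:ℤ)*(6*(n:ℤ)) := by rw [hKk]; ring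
    have hpos3 : p0 + 3*(K:ℤ) + 2 = (p0 + 3*k + 2) + (t:ℤ)*(6*(n:ℤ)) := by rw [hKk]; ring
    obtain ⟨c1, c2, c3⟩ := hF K
    refine ⟨?_, ?_, ?_⟩
    · rw [hpos1] at c1
      rw [← hper6iter t (p0 + 3*k), c1]
      congr 1
      exact if_congr hiff rfl rfl
    · rw [hpos2] at c2
      rw [← hper6iter t (p0 + 3*k + 1), c2, hvalK]
    · rw [hpos3] at c3
      rw [← hper6iter t (p0 + 3*k + 2), c3, hvalK]
  -- solving machinery
  obtain ⟨u, hu⟩ := BPAux.half_exists h3 ho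
  have hee : e*e = 1 := by rcases he with rfl | rfl <;> norm_num
  have hsolve : ∀ (d : ZMod n) (j : ℕ), j < 2 →
      ∃ k : ℕ, (e+e)*((k:ℕ) : ZMod n) = d ∧ k % 2 = j := by
    intro d j hj
    obtain ⟨k, hk1, hk2⟩ := BPAux.exists_k h3 ho (u*(e*d)) j hj
    refine ⟨k, ?_, hk2⟩
    rw [hk1]
    linear_combination (e*e*d)*hu + d*hee
  have hClass : ∀ p : ℤ, ∃ k : ℤ, p = p0 + 3*k ∨ p = p0 + 3*k + 1 ∨ p = p0 + 3*k + 2 :=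
    fun p => ⟨(p - p0)/3, by omega⟩
  have hmod6 : ∀ k k' c : ℤ, (e+e)*((k:ℤ) : ZMod n) = (e+e)*((k':ℤ) : ZMod n) →
      k % 2 = k' % 2 →
      ((p0 + 3*k + c : ℤ) : ZMod Z.n) = ((p0 + 3*k' + c : ℤ) : ZMod Z.n) := by
    intro k k' c hres hpar
    have hkk : ((k:ℤ) : ZMod n) = ((k':ℤ) : ZMod n) := hkey _ _ hres
    obtain ⟨w, hw⟩ := BPAux.dvd_two_n h3 ho hkk hpar
    rw [hZn, ZMod.intCast_eq_intCast_iff]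
    refine Int.modEq_iff_dvd.mpr ⟨-w, ?_⟩
    push_cast
    linear_combination (-3:ℤ)*hw
  -- the four pass statements for apex edges
  have passA : ∀ (s' : Bool) (i : ZMod n), Z.Passes (Sum.inl s') (Sum.inr i) := by
    intro s' i
    obtain ⟨k, hk1, hk2⟩ := hsolve (i - m) (if s' = s0 then 0 else 1) (by split <;> omega)
    refine ⟨p0 + 3*((k:ℕ):ℤ), ?_, ?_⟩
    · rw [(hFZ ((k:ℕ):ℤ)).1]
      congr 1
      by_cases hs : s' = s0
      · rw [if_pos hs] at hk2
        rw [if_pos (show ((k:ℕ):ℤ) % 2 = 0 by omega)]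
        exact hs.symm
      · rw [if_neg hs] at hk2
        rw [if_neg (show ¬ (((k:ℕ):ℤ) % 2 = 0) by omega)]
        revert hs; cases s0 <;> cases s' <;> decide
    · rw [(hFZ ((k:ℕ):ℤ)).2.1]
      congr 1
      push_cast
      push_cast at hk1
      linear_combination hk1
  have passB : ∀ (s' : Bool) (i : ZMod n), Z.Passes (Sum.inr i) (Sum.inl s') := by
    intro s' i
    obtain ⟨k, hk1, hk2⟩ := hsolve (i - m - e) (if s' = s0 then 1 else 0) (by split <;> omega)
    refine ⟨p0 + 3*((k:ℕ):ℤ) + 2, ?_, ?_⟩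
    · rw [(hFZ ((k:ℕ):ℤ)).2.2]
      congr 1
      push_cast
      push_cast at hk1
      linear_combination hk1
    · rw [show p0 + 3*((k:ℕ):ℤ) + 2 + 1 = p0 + 3*(((k:ℕ):ℤ)+1) from by ring,
        (hFZ (((k:ℕ):ℤ)+1)).1]
      congr 1
      by_cases hs : s' = s0
      · rw [if_pos hs] at hk2
        rw [if_pos (show (((k:ℕ):ℤ)+1) % 2 = 0 by omega)]
        exact hs.symm
      · rw [if_neg hs] at hk2
        rw [if_neg (show ¬ ((((k:ℕ):ℤ)+1) % 2 = 0) by omega)]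
        revert hs; cases s0 <;> cases s' <;> decide
  have noA : ∀ (s' : Bool) (i : ZMod n), ¬ Z.PassesTwice (Sum.inl s') (Sum.inr i) := by
    rintro s' i ⟨p, q, hne, hp1, hp2, hq1, hq2⟩
    have hchar : ∀ x : ℤ, Z.seq x = Sum.inl s' → Z.seq (x+1) = Sum.inr i →
        ∃ k : ℤ, x = p0 + 3*k ∧ k % 2 = (if s' = s0 then 0 else 1) ∧
          (e+e)*((k:ℤ) : ZMod n) = i - m := by
      intro x hx1 hx2
      obtain ⟨k, hk | hk | hk⟩ := hClass x
      · subst hk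
        refine ⟨k, rfl, ?_, ?_⟩
        · rw [(hFZ k).1] at hx1
          simp only [Sum.inl.injEq] at hx1
          by_cases h1 : k % 2 = 0
          · rw [if_pos h1] at hx1
            rw [if_pos hx1.symm]
            exact h1
          · rw [if_neg h1] at hx1
            have hss : ¬ (s' = s0) := by revert hx1; cases s0 <;> cases s' <;> decide
            rw [if_neg hss]
            omega
        · rw [(hFZ k).2.1] at hx2
          simp only [Sum.inr.injEq] at hx2
          linear_combination hx2
      · exfalso; subst hk; rw [(hFZ k).2.1] at hx1; simp at hx1
      · exfalso; subst hk; rw [(hFZ k).2.2] at hx1; simp at hx1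
    obtain ⟨k, hk, hkp, hkr⟩ := hchar p hp1 hp2
    obtain ⟨k', hk', hkp', hkr'⟩ := hchar q hq1 hq2
    apply hne
    rw [hk, hk']
    have hmm := hmod6 k k' 0 (by rw [hkr, hkr']) (by omega)
    rw [show p0+3*k+0 = p0+3*k from by ring, show p0+3*k'+0 = p0+3*k' from by ring] at hmm
    exact hmm
  have noB : ∀ (s' : Bool) (i : ZMod n), ¬ Z.PassesTwice (Sum.inr i) (Sum.inl s') := by
    rintro s' i ⟨p, q, hne, hp1, hp2, hq1, hq2⟩
    have hchar : ∀ x : ℤ, Z.seq x = Sum.inr i → Z.seq (x+1) = Sum.inl s' →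
        ∃ k : ℤ, x = p0 + 3*k + 2 ∧ k % 2 = (if s' = s0 then 1 else 0) ∧
          (e+e)*((k:ℤ) : ZMod n) = i - m - e := by
      intro x hx1 hx2
      obtain ⟨k, hk | hk | hk⟩ := hClass x
      · exfalso; subst hk; rw [(hFZ k).1] at hx1; simp at hx1
      · exfalso; subst hk
        rw [show p0+3*k+1+1 = p0+3*k+2 from by ring, (hFZ k).2.2] at hx2
        simp at hx2
      · subst hk
        refine ⟨k, rfl, ?_, ?_⟩
        · rw [show p0+3*k+2+1 = p0+3*(k+1) from by ring, (hFZ (k+1)).1] at hx2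
          simp only [Sum.inl.injEq] at hx2
          by_cases h1 : (k+1) % 2 = 0
          · rw [if_pos h1] at hx2
            rw [if_pos hx2.symm]
            omega
          · rw [if_neg h1] at hx2
            have hss : ¬ (s' = s0) := by revert hx2; cases s0 <;> cases s' <;> decide
            rw [if_neg hss]
            omega
        · rw [(hFZ k).2.2] at hx1
          simp only [Sum.inr.injEq] at hx1
          linear_combination hx1
    obtain ⟨k, hk, hkp, hkr⟩ := hchar p hp1 hp2
    obtain ⟨k', hk', hkp', hkr'⟩ := hchar q hq1 hq2
    apply hne
    rw [hk, hk']
    exact hmod6 k k' 2 (by rw [hkr, hkr']) (by omega)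
  have hgon : ∀ i : ZMod n, Z.SecondTypeEdge (Sum.inr i) (Sum.inr (i+1)) := by
    intro i
    have hdistinct : ∀ k : ℕ,
        ¬ (((p0 + 3*((k:ℕ):ℤ) + 1 : ℤ) : ZMod Z.n) = ((p0 + 3*((k+n:ℕ):ℤ) + 1 : ℤ) : ZMod Z.n)) := by
      intro k hEq
      rw [hZn, ZMod.intCast_eq_intCast_iff] at hEq
      have hd := Int.ModEq.dvd hEq
      rw [show (p0 + 3*((k+n:ℕ):ℤ) + 1) - (p0 + 3*((k:ℕ):ℤ) + 1) = 3*(n:ℤ) from by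
        push_cast; ring] at hd
      have hle := Int.le_of_dvd (by positivity) hd
      push_cast at hle
      omega
    have hcastn : ∀ k : ℕ, (((k+n:ℕ)) : ZMod n) = ((k:ℕ) : ZMod n) := by
      intro k; push_cast [ZMod.natCast_self]; ring
    rcases he with rfl | rfl
    · obtain ⟨k, hk1, hk2⟩ := hsolve (i - m) 0 (by omega)
      refine Or.inl ⟨p0 + 3*((k:ℕ):ℤ) + 1, p0 + 3*((k+n:ℕ):ℤ) + 1, hdistinct k, ?_, ?_, ?_, ?_⟩
      · rw [(hFZ ((k:ℕ):ℤ)).2.1]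
        congr 1
        push_cast at hk1 ⊢
        linear_combination hk1
      · rw [show p0 + 3*((k:ℕ):ℤ) + 1 + 1 = p0 + 3*((k:ℕ):ℤ) + 2 from by ring,
          (hFZ ((k:ℕ):ℤ)).2.2]
        congr 1
        push_cast at hk1 ⊢
        linear_combination hk1
      · rw [(hFZ ((k+n:ℕ):ℤ)).2.1]
        congr 1
        rw [show ((((k+n:ℕ):ℤ)) : ZMod n) = (((k+n:ℕ)) : ZMod n) from Int.cast_natCast _,
          hcastn k]
        push_cast at hk1 ⊢
        linear_combination hk1
      · rw [show p0 + 3*((k+n:ℕ):ℤ) + 1 + 1 = p0 + 3*((k+n:ℕ):ℤ) + 2 from by ring,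
          (hFZ ((k+n:ℕ):ℤ)).2.2]
        congr 1
        rw [show ((((k+n:ℕ):ℤ)) : ZMod n) = (((k+n:ℕ)) : ZMod n) from Int.cast_natCast _,
          hcastn k]
        push_cast at hk1 ⊢
        linear_combination hk1
    · obtain ⟨k, hk1, hk2⟩ := hsolve (i + 1 - m) 0 (by omega)
      refine Or.inr ⟨p0 + 3*((k:ℕ):ℤ) + 1, p0 + 3*((k+n:ℕ):ℤ) + 1, hdistinct k, ?_, ?_, ?_, ?_⟩
      · rw [(hFZ ((k:ℕ):ℤ)).2.1]
        congr 1
        push_cast at hk1 ⊢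
        linear_combination hk1
      · rw [show p0 + 3*((k:ℕ):ℤ) + 1 + 1 = p0 + 3*((k:ℕ):ℤ) + 2 from by ring,
          (hFZ ((k:ℕ):ℤ)).2.2]
        congr 1
        push_cast at hk1 ⊢
        linear_combination hk1
      · rw [(hFZ ((k+n:ℕ):ℤ)).2.1]
        congr 1
        rw [show ((((k+n:ℕ):ℤ)) : ZMod n) = (((k+n:ℕ)) : ZMod n) from Int.cast_natCast _,
          hcastn k]
        push_cast at hk1 ⊢
        linear_combination hk1
      · rw [show p0 + 3*((k+n:ℕ):ℤ) + 1 + 1 = p0 + 3*((k+n:ℕ):ℤ) + 2 from by ring,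
          (hFZ ((k+n:ℕ):ℤ)).2.2]
        congr 1
        rw [show ((((k+n:ℕ):ℤ)) : ZMod n) = (((k+n:ℕ)) : ZMod n) from Int.cast_natCast _,
          hcastn k]
        push_cast at hk1 ⊢
        linear_combination hk1
  have hnof : ∀ i : ZMod n, ¬ Z.FirstTypeEdge (Sum.inr i) (Sum.inr (i+1)) := by
    intro i hFT
    obtain ⟨h1, h2⟩ := hFT
    have hinr : ∀ (x : ℤ) (a b : ZMod n), Z.seq x = Sum.inr a → Z.seq (x+1) = Sum.inr b →
        b = a + e := by
      intro x a b hx1 hx2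
      obtain ⟨k, hk | hk | hk⟩ := hClass x
      · exfalso; subst hk; rw [(hFZ k).1] at hx1; simp at hx1
      · subst hk
        rw [(hFZ k).2.1] at hx1
        rw [show p0+3*k+1+1 = p0+3*k+2 from by ring, (hFZ k).2.2] at hx2
        simp only [Sum.inr.injEq] at hx1 hx2
        rw [← hx1, ← hx2]
      · exfalso; subst hk
        rw [show p0+3*k+2+1 = p0+3*(k+1) from by ring, (hFZ (k+1)).1] at hx2
        simp at hx2
    rcases he with rfl | rfl
    · obtain ⟨p, hp1, hp2⟩ := h2
      have hh := hinr p (i+1) i hp1 hp2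
      exact BPAux.zm_two_ne h3 (by linear_combination -hh)
    · obtain ⟨p, hp1, hp2⟩ := h1
      have hh := hinr p i (i+1) hp1 hp2
      exact BPAux.zm_two_ne h3 (by linear_combination hh)
  refine ⟨fun s' i => ⟨⟨passA s' i, passB s' i⟩, fun h => h.elim (noA s' i) (noB s' i)⟩,
    fun i => ⟨hgon i, hnof i⟩, ?_⟩
  rintro F ⟨s', i, rfl⟩
  have hne1 : (Sum.inl s' : Bool ⊕ ZMod n) ≠ Sum.inr i := by simp
  have hne2 : (Sum.inl s' : Bool ⊕ ZMod n) ≠ Sum.inr (i+1) := by simp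
  have hne3 : (Sum.inr i : Bool ⊕ ZMod n) ≠ Sum.inr (i+1) := by
    simp only [ne_eq, Sum.inr.injEq]
    intro h
    exact BPAux.zm_one_ne h3 (by linear_combination -h)
  have hno2 : ¬ Z.SecondTypeEdge (Sum.inl s') (Sum.inr i) :=
    fun h => h.elim (noA s' i) (noB s' i)
  have hno3 : ¬ Z.SecondTypeEdge (Sum.inl s') (Sum.inr (i+1)) :=
    fun h => h.elim (noA s' (i+1)) (noB s' (i+1))
  exact ⟨⟨Sum.inl s', Sum.inr i, Sum.inr (i+1), rfl, hne1, hne2, hne3, hgon i, hno2, hno3⟩,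
    s', i, rfl, hgon i, hno2, hno3⟩
end

section
/- Let n = 2k+1 with k ≥ 1, so that the bipyramid BP_n is z-knotted and every face of BP_n is a (1,1,2)-face. If k is odd, then every face of BP_n is a (1,1,2)-face of odd type; if k is even, then every face of BP_n is a (1,1,2)-face of even type. -/
universe u v

open PreTriangulation

-- ===================== auxiliary development =====================
namespace BPAux

open PreTriangulation

/-- The canonical zigzag sequence in `BP n`. -/
def zig (n : ℕ) : ℤ → Bool ⊕ ZMod n := fun i =>
  if i % 3 = 0 then Sum.inl (decide (i / 3 % 2 = 0))
  else if i % 3 = 1 then Sum.inr ((2 * (i / 3) : ℤ) : ZMod n)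
  else Sum.inr ((2 * (i / 3) + 1 : ℤ) : ZMod n)

/-- The reversal automorphism of `BP n`. -/
def phi (n : ℕ) : Bool ⊕ ZMod n → Bool ⊕ ZMod n
  | Sum.inl s => Sum.inl s
  | Sum.inr j => Sum.inr (-j)

lemma phi_inj (n : ℕ) : Function.Injective (phi n) := by
  rintro (s | j) (t | l) h <;> simp [phi] at h <;> simp [h]

lemma zig_val0 (n : ℕ) (m : ℤ) : zig n (3*m) = Sum.inl (decide (m % 2 = 0)) := by
  have h1 : 3*m % 3 = 0 := by omega
  have h2 : 3*m / 3 = m := by omega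
  simp [zig, h1, h2]

lemma zig_val1 (n : ℕ) (m : ℤ) : zig n (3*m+1) = Sum.inr ((2*m : ℤ) : ZMod n) := by
  have h1 : (3*m+1) % 3 = 1 := by omega
  have h2 : (3*m+1) / 3 = m := by omega
  simp [zig, h1, h2]

lemma zig_val2 (n : ℕ) (m : ℤ) : zig n (3*m+2) = Sum.inr ((2*m+1 : ℤ) : ZMod n) := by
  have h1 : (3*m+2) % 3 = 2 := by omega
  have h2 : (3*m+2) / 3 = m := by omega
  simp [zig, h1, h2]

lemma zig_eq_inl {n : ℕ} {i : ℤ} {s : Bool} (h : zig n i = Sum.inl s) :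
    ∃ m : ℤ, i = 3*m ∧ s = decide (m % 2 = 0) := by
  by_cases h1 : i % 3 = 0
  · unfold zig at h
    rw [if_pos h1] at h
    exact ⟨i/3, by omega, (Sum.inl.inj h).symm⟩
  · by_cases h2 : i % 3 = 1 <;> simp [zig, h1, h2] at h

lemma castEq {n : ℕ} {a b : ℤ} (h : (n:ℤ) ∣ a - b) : ((a:ℤ) : ZMod n) = ((b:ℤ) : ZMod n) := by
  have := (ZMod.intCast_zmod_eq_zero_iff_dvd (a - b) n).mpr h
  push_cast at this
  linear_combination this

lemma castNe {n : ℕ} {a b : ℤ} (h1 : 0 < a - b) (h2 : a - b < n) :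
    ((a:ℤ) : ZMod n) ≠ ((b:ℤ) : ZMod n) := by
  intro h
  have : ((a - b : ℤ) : ZMod n) = 0 := by push_cast; linear_combination h
  have := (ZMod.intCast_zmod_eq_zero_iff_dvd (a - b) n).mp this
  have := Int.le_of_dvd h1 this
  omega

lemma castExtract {n : ℕ} {a b : ℤ} (h : ((a:ℤ) : ZMod n) = ((b:ℤ) : ZMod n)) : (n:ℤ) ∣ a - b := by
  have : ((a - b : ℤ) : ZMod n) = 0 := by push_cast; linear_combination h
  exact (ZMod.intCast_zmod_eq_zero_iff_dvd (a - b) n).mp this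

lemma int_surj {n : ℕ} (hn3 : 3 ≤ n) (j : ZMod n) : ∃ a : ℤ, ((a:ℤ) : ZMod n) = j := by
  haveI : NeZero n := ⟨by omega⟩
  exact ⟨(j.val : ℤ), by push_cast; simp [ZMod.natCast_val, ZMod.cast_id]⟩

lemma par_succ (m : ℤ) : decide ((m+1) % 2 = 0) = !decide (m % 2 = 0) := by
  have h : m % 2 = 0 ∨ m % 2 = 1 := by omega
  rcases h with h | h
  · have h2 : (m+1) % 2 = 1 := by omega
    rw [h, h2]; simp
  · have h2 : (m+1) % 2 = 0 := by omega
    rw [h, h2]; simp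

lemma zig_decomp (i : ℤ) : ∃ m : ℤ, i = 3*m ∨ i = 3*m+1 ∨ i = 3*m+2 :=
  ⟨i/3, by omega⟩

lemma zig_period (n : ℕ) (i : ℤ) : zig n (i + 6*n) = zig n i := by
  obtain ⟨m, hm | hm | hm⟩ := zig_decomp i <;> subst hm
  · rw [show 3*m + 6*(n:ℤ) = 3*(m+2*n) by ring, zig_val0, zig_val0]
    congr 1
    have : (m + 2*(n:ℤ)) % 2 = m % 2 := by omega
    rw [this]
  · rw [show 3*m+1 + 6*(n:ℤ) = 3*(m+2*n)+1 by ring, zig_val1, zig_val1]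
    exact congrArg _ (castEq ⟨4, by ring⟩)
  · rw [show 3*m+2 + 6*(n:ℤ) = 3*(m+2*n)+2 by ring, zig_val2, zig_val2]
    exact congrArg _ (castEq ⟨4, by ring⟩)

lemma dvd_of_dvd_two_mul {n : ℕ} (hodd : n % 2 = 1) {a : ℤ} (h : (n:ℤ) ∣ 2*a) :
    (n:ℤ) ∣ a := by
  set u := n / 2 with hu
  have hn : (n:ℤ) = 2*u+1 := by push_cast; omega
  have h2 : (n:ℤ) ∣ ((u:ℤ)+1)*(2*a) := Dvd.dvd.mul_left h _
  have h3 : ((u:ℤ)+1)*(2*a) - (n:ℤ)*a = a := by rw [hn]; ring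
  have := dvd_sub h2 (dvd_mul_right (n:ℤ) a)
  rwa [h3] at this

lemma two_n_dvd {n : ℕ} (hodd : n % 2 = 1) {d : ℤ} (h1 : (n:ℤ) ∣ d) (h2 : (2:ℤ) ∣ d) :
    (2*(n:ℤ)) ∣ d := by
  obtain ⟨c, hc⟩ := h1
  have hev : Even d := ⟨d/2, by omega⟩
  rw [hc] at hev
  rcases Int.even_mul.mp hev with h | h
  · exfalso
    obtain ⟨x, hx⟩ := h
    omega
  · obtain ⟨x, hx⟩ := h
    exact ⟨x, by rw [hc, hx]; ring⟩

lemma zig_min_period {n : ℕ} (hn3 : 3 ≤ n) (hodd : n % 2 = 1) (m : ℕ) (hm : 0 < m)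
    (h : ∀ i : ℤ, zig n (i + m) = zig n i) : 6*n ≤ m := by
  have h0 : zig n (m : ℤ) = Sum.inl true := by
    have := h 0
    rw [zero_add] at this
    rw [this, show (0:ℤ) = 3*0 by ring, zig_val0]
    simp
  obtain ⟨m', hm', hpar⟩ := zig_eq_inl h0
  have h1 : zig n (3*m'+1) = Sum.inr ((0 : ℤ) : ZMod n) := by
    have := h 1
    rw [show (1:ℤ) + m = 3*m'+1 by omega] at this
    rw [this, show (1:ℤ) = 3*0+1 by ring, zig_val1]
    norm_num
  rw [zig_val1] at h1
  have hdvd : (n:ℤ) ∣ 2*m' := by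
    have := castExtract (Sum.inr.inj h1)
    simpa using this
  have hnm : (n:ℤ) ∣ m' := dvd_of_dvd_two_mul hodd hdvd
  have h2d : (2:ℤ) ∣ m' := by
    have : m' % 2 = 0 := by
      have := hpar.symm
      simpa using this
    omega
  have h2n : (2*(n:ℤ)) ∣ m' := two_n_dvd hodd hnm h2d
  have hpos : 0 < m' := by omega
  have := Int.le_of_dvd hpos h2n
  omega

lemma U1 {n : ℕ} (hodd : n % 2 = 1) {a b : ℤ} {s : Bool} {j : ZMod n}
    (ha1 : zig n a = Sum.inl s) (ha2 : zig n (a+1) = Sum.inr j)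
    (hb1 : zig n b = Sum.inl s) (hb2 : zig n (b+1) = Sum.inr j) :
    (6*(n:ℤ)) ∣ a - b := by
  obtain ⟨ma, hma, hpa⟩ := zig_eq_inl ha1
  obtain ⟨mb, hmb, hpb⟩ := zig_eq_inl hb1
  rw [hma, show 3*ma + 1 = 3*ma+1 by ring, zig_val1] at ha2
  rw [hmb, show 3*mb + 1 = 3*mb+1 by ring, zig_val1] at hb2
  have hcast : (n:ℤ) ∣ 2*ma - 2*mb := castExtract (by rw [Sum.inr.inj ha2, Sum.inr.inj hb2])
  have hn : (n:ℤ) ∣ ma - mb := dvd_of_dvd_two_mul hodd (by convert hcast using 1; ring)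
  have hpar : ma % 2 = mb % 2 := by
    have : decide (ma % 2 = 0) = decide (mb % 2 = 0) := by rw [← hpa, ← hpb]
    have := decide_eq_decide.mp this
    omega
  have h2 : (2:ℤ) ∣ ma - mb := by omega
  obtain ⟨c, hc⟩ := two_n_dvd hodd hn h2
  exact ⟨c, by rw [hma, hmb, show 3*ma - 3*mb = 3*(ma-mb) by ring, hc]; ring⟩

lemma U2 {n : ℕ} (hodd : n % 2 = 1) {a b : ℤ} {s : Bool} {j : ZMod n}
    (ha1 : zig n a = Sum.inr j) (ha2 : zig n (a+1) = Sum.inl s)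
    (hb1 : zig n b = Sum.inr j) (hb2 : zig n (b+1) = Sum.inl s) :
    (6*(n:ℤ)) ∣ a - b := by
  obtain ⟨ma, hma, hpa⟩ := zig_eq_inl ha2
  obtain ⟨mb, hmb, hpb⟩ := zig_eq_inl hb2
  rw [show a = 3*(ma-1)+2 by omega, zig_val2] at ha1
  rw [show b = 3*(mb-1)+2 by omega, zig_val2] at hb1
  have hcast : (n:ℤ) ∣ (2*(ma-1)+1) - (2*(mb-1)+1) := castExtract (by rw [Sum.inr.inj ha1, Sum.inr.inj hb1])
  have hn : (n:ℤ) ∣ ma - mb := dvd_of_dvd_two_mul hodd (by convert hcast using 1; ring)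
  have hpar : ma % 2 = mb % 2 := by
    have : decide (ma % 2 = 0) = decide (mb % 2 = 0) := by rw [← hpa, ← hpb]
    have := decide_eq_decide.mp this
    omega
  have h2 : (2:ℤ) ∣ ma - mb := by omega
  obtain ⟨c, hc⟩ := two_n_dvd hodd hn h2
  exact ⟨c, by rw [show a - b = 3*(ma - mb) by omega, hc]; ring⟩

section BPLemmas

open PreTriangulation

variable {n : ℕ}

lemma one_ne_zero' (hn3 : 3 ≤ n) : (1 : ZMod n) ≠ 0 := by
  have h := castNe (n := n) (a := 1) (b := 0) (by norm_num) (by omega)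
  simpa using h

lemma two_ne_zero' (hn3 : 3 ≤ n) : (2 : ZMod n) ≠ 0 := by
  have h := castNe (n := n) (a := 2) (b := 0) (by norm_num) (by omega)
  simpa using h

lemma face_mem_bp (s : Bool) (j : ZMod n) :
    ({Sum.inl s, Sum.inr j, Sum.inr (j+1)} : Finset (Bool ⊕ ZMod n)) ∈ (bp n).faces :=
  ⟨s, j, rfl⟩

lemma zig_face (hn3 : 3 ≤ n) (i : ℤ) : ∃ (s : Bool) (j : ZMod n),
    ({zig n i, zig n (i+1), zig n (i+2)} : Finset (Bool ⊕ ZMod n)) =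
      {Sum.inl s, Sum.inr j, Sum.inr (j+1)} := by
  obtain ⟨m, hm|hm|hm⟩ := zig_decomp i <;> subst hm
  · refine ⟨decide (m % 2 = 0), ((2*m : ℤ) : ZMod n), ?_⟩
    rw [zig_val0, show (3*m:ℤ)+1 = 3*m+1 from rfl, zig_val1,
      show (3*m:ℤ)+2 = 3*m+2 from rfl, zig_val2]
    have hc : ((2*m+1 : ℤ) : ZMod n) = ((2*m:ℤ) : ZMod n) + 1 := by push_cast; ring
    rw [hc]
  · refine ⟨decide ((m+1) % 2 = 0), ((2*m : ℤ) : ZMod n), ?_⟩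
    rw [zig_val1, show (3*m+1:ℤ)+1 = 3*m+2 by ring, zig_val2,
      show (3*m+1:ℤ)+2 = 3*(m+1) by ring, zig_val0]
    have hc : ((2*m+1 : ℤ) : ZMod n) = ((2*m:ℤ) : ZMod n) + 1 := by push_cast; ring
    rw [hc]
    ext a; simp; tauto
  · refine ⟨decide ((m+1) % 2 = 0), ((2*m+1 : ℤ) : ZMod n), ?_⟩
    rw [zig_val2, show (3*m+2:ℤ)+1 = 3*(m+1) by ring, zig_val0,
      show (3*m+2:ℤ)+2 = 3*(m+1)+1 by ring, zig_val1]
    have hc : ((2*(m+1) : ℤ) : ZMod n) = ((2*m+1:ℤ) : ZMod n) + 1 := by push_cast; ring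
    rw [hc]
    ext a; simp; tauto

lemma zig_d1 (hn3 : 3 ≤ n) (i : ℤ) : zig n (i+1) ≠ zig n i := by
  obtain ⟨m, hm|hm|hm⟩ := zig_decomp i <;> subst hm
  · rw [zig_val0, show (3*m:ℤ)+1 = 3*m+1 from rfl, zig_val1]; simp
  · rw [show (3*m+1:ℤ)+1 = 3*m+2 by ring, zig_val2, zig_val1]
    intro h
    exact castNe (a := 2*m+1) (b := 2*m) (by omega) (by omega) (Sum.inr.inj h)
  · rw [show (3*m+2:ℤ)+1 = 3*(m+1) by ring, zig_val0, zig_val2]; simp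

lemma zig_d2 (hn3 : 3 ≤ n) (i : ℤ) : zig n (i+2) ≠ zig n i := by
  obtain ⟨m, hm|hm|hm⟩ := zig_decomp i <;> subst hm
  · rw [zig_val0, show (3*m:ℤ)+2 = 3*m+2 from rfl, zig_val2]; simp
  · rw [show (3*m+1:ℤ)+2 = 3*(m+1) by ring, zig_val0, zig_val1]; simp
  · rw [show (3*m+2:ℤ)+2 = 3*(m+1)+1 by ring, zig_val1, zig_val2]
    intro h
    exact castNe (a := 2*(m+1)) (b := 2*m+1) (by omega) (by omega) (Sum.inr.inj h)

lemma zig_tne (hn3 : 3 ≤ n) (i : ℤ) :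
    ({zig n (i+1), zig n (i+2), zig n (i+3)} : Finset (Bool ⊕ ZMod n)) ≠
      {zig n i, zig n (i+1), zig n (i+2)} := by
  obtain ⟨m, hm|hm|hm⟩ := zig_decomp i <;> subst hm <;> intro h
  · have key : zig n (3*m+3) ∈ ({zig n (3*m), zig n (3*m+1), zig n (3*m+2)} :
        Finset (Bool ⊕ ZMod n)) := by
      rw [← h]
      have : (3*m:ℤ)+3 = (3*m+2)+1 := by ring
      simp [show (3*m:ℤ)+1+1 = 3*m+2 by ring, show (3*m:ℤ)+1+2 = 3*m+3 by ring]
    rw [show (3*m:ℤ)+3 = 3*(m+1) by ring, zig_val0, zig_val0, zig_val1, zig_val2] at key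
    rcases Finset.mem_insert.mp key with h1 | h1
    · have := decide_eq_decide.mp (Sum.inl.inj h1)
      omega
    · simp at h1
  · have key : zig n (3*(m+1)+1) ∈ ({zig n (3*m+1), zig n (3*m+2), zig n (3*(m+1))} :
        Finset (Bool ⊕ ZMod n)) := by
      rw [show (3*m+1:ℤ)+1 = 3*m+2 by ring, show (3*m+1:ℤ)+2 = 3*(m+1) by ring] at h
      rw [← h]
      simp [show (3*(m+1):ℤ)+1 = (3*m+1)+3 by ring, show (3*m+2:ℤ)+1 = 3*(m+1) by ring]
    rw [zig_val1, zig_val1, zig_val2, zig_val0] at key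
    simp only [Finset.mem_insert, Finset.mem_singleton] at key
    rcases key with h1 | h1 | h1
    · exact castNe (a := 2*(m+1)) (b := 2*m) (by omega) (by omega) (Sum.inr.inj h1)
    · exact castNe (a := 2*(m+1)) (b := 2*m+1) (by omega) (by omega) (Sum.inr.inj h1)
    · simp at h1
  · have key : zig n (3*(m+1)+2) ∈ ({zig n (3*m+2), zig n (3*(m+1)), zig n (3*(m+1)+1)} :
        Finset (Bool ⊕ ZMod n)) := by
      rw [show (3*m+2:ℤ)+1 = 3*(m+1) by ring, show (3*m+2:ℤ)+2 = 3*(m+1)+1 by ring] at h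
      rw [← h]
      simp [show (3*(m+1):ℤ)+2 = (3*m+2)+3 by ring, show (3*(m+1):ℤ)+1+1 = 3*(m+1)+2 by ring]
    rw [zig_val2, zig_val2, zig_val0, zig_val1] at key
    simp only [Finset.mem_insert, Finset.mem_singleton] at key
    rcases key with h1 | h1 | h1
    · exact castNe (a := 2*(m+1)+1) (b := 2*m+1) (by omega) (by omega) (Sum.inr.inj h1)
    · simp at h1
    · exact castNe (a := 2*(m+1)+1) (b := 2*(m+1)) (by omega) (by omega) (Sum.inr.inj h1)

end BPLemmas

section BPLemmas2

open PreTriangulation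

variable {n : ℕ}

lemma faces_with_pair (hn3 : 3 ≤ n) (x y : Bool ⊕ ZMod n) (hxy : x ≠ y) :
    ∃ A B : Finset (Bool ⊕ ZMod n),
      ∀ G ∈ (bp n).faces, x ∈ G → y ∈ G → G = A ∨ G = B := by
  have h1 : (1 : ZMod n) ≠ 0 := one_ne_zero' hn3
  have h2 : (2 : ZMod n) ≠ 0 := two_ne_zero' hn3
  match x, y with
  | Sum.inl s, Sum.inl t =>
      refine ⟨∅, ∅, ?_⟩
      rintro G ⟨s', j, rfl⟩ hx hy
      simp at hx hy
      exact absurd (by rw [show s = t from hx.trans hy.symm]) hxy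
  | Sum.inl s, Sum.inr p =>
      refine ⟨{Sum.inl s, Sum.inr p, Sum.inr (p+1)},
        {Sum.inl s, Sum.inr (p-1), Sum.inr (p-1+1)}, ?_⟩
      rintro G ⟨s', j, rfl⟩ hx hy
      simp at hx hy
      subst hx
      rcases hy with rfl | hy
      · left; rfl
      · right; rw [show j = p - 1 by rw [hy]; ring]
  | Sum.inr p, Sum.inl s =>
      refine ⟨{Sum.inl s, Sum.inr p, Sum.inr (p+1)},
        {Sum.inl s, Sum.inr (p-1), Sum.inr (p-1+1)}, ?_⟩
      rintro G ⟨s', j, rfl⟩ hx hy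
      simp at hx hy
      subst hy
      rcases hx with rfl | hx
      · left; rfl
      · right; rw [show j = p - 1 by rw [hx]; ring]
  | Sum.inr p, Sum.inr q =>
      have hpq : p ≠ q := fun h => hxy (by rw [h])
      by_cases hq : q = p + 1
      · refine ⟨{Sum.inl true, Sum.inr p, Sum.inr (p+1)},
          {Sum.inl false, Sum.inr p, Sum.inr (p+1)}, ?_⟩
        rintro G ⟨s', j, rfl⟩ hx hy
        simp at hx hy
        rcases hx with rfl | hx
        · cases s'
          · right; rfl
          · left; rfl
        · exfalso
          rcases hy with hy | hy
          · have h3 : j = j + 1 + 1 := by rw [← hx, ← hq, hy]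
            exact h2 (by linear_combination h3.symm)
          · exact hpq (hx.trans hy.symm)
      · by_cases hp : p = q + 1
        · refine ⟨{Sum.inl true, Sum.inr q, Sum.inr (q+1)},
            {Sum.inl false, Sum.inr q, Sum.inr (q+1)}, ?_⟩
          rintro G ⟨s', j, rfl⟩ hx hy
          simp at hx hy
          rcases hy with rfl | hy
          · cases s'
            · right; rfl
            · left; rfl
          · exfalso
            rcases hx with hx | hx
            · have h3 : j = j + 1 + 1 := by rw [← hy, ← hp, hx]
              exact h2 (by linear_combination h3.symm)
            · exact hpq (hx.trans hy.symm)
        · refine ⟨∅, ∅, ?_⟩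
          rintro G ⟨s', j, rfl⟩ hx hy
          exfalso
          simp at hx hy
          rcases hx with rfl | hx <;> rcases hy with rfl | hy
          · exact hpq rfl
          · exact hq hy
          · exact hp hx
          · exact hpq (hx.trans hy.symm)

lemma two_faces (hn3 : 3 ≤ n) (x y : Bool ⊕ ZMod n) (hadj : (bp n).graph.Adj x y) :
    ∃ G₁ G₂ : Finset (Bool ⊕ ZMod n), G₁ ∈ (bp n).faces ∧ G₂ ∈ (bp n).faces ∧
      G₁ ≠ G₂ ∧ x ∈ G₁ ∧ y ∈ G₁ ∧ x ∈ G₂ ∧ y ∈ G₂ := by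
  have h1 : (1 : ZMod n) ≠ 0 := one_ne_zero' hn3
  have h2 : (2 : ZMod n) ≠ 0 := two_ne_zero' hn3
  match x, y with
  | Sum.inl s, Sum.inl t => exact hadj.elim
  | Sum.inl s, Sum.inr p =>
      refine ⟨{Sum.inl s, Sum.inr p, Sum.inr (p+1)},
        {Sum.inl s, Sum.inr (p-1), Sum.inr (p-1+1)},
        face_mem_bp s p, face_mem_bp s (p-1), ?_, by simp, by simp, by simp, ?_⟩
      · intro h
        have hm : (Sum.inr (p+1) : Bool ⊕ ZMod n) ∈
            ({Sum.inl s, Sum.inr (p-1), Sum.inr (p-1+1)} : Finset (Bool ⊕ ZMod n)) := by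
          rw [← h]; simp
        simp at hm
        rcases hm with hm | hm
        · exact h2 (by linear_combination hm)
        · exact h1 (by linear_combination hm)
      · have hp : p - 1 + 1 = p := by ring
        simp [hp]
  | Sum.inr p, Sum.inl s =>
      refine ⟨{Sum.inl s, Sum.inr p, Sum.inr (p+1)},
        {Sum.inl s, Sum.inr (p-1), Sum.inr (p-1+1)},
        face_mem_bp s p, face_mem_bp s (p-1), ?_, by simp, by simp, ?_, by simp⟩
      · intro h
        have hm : (Sum.inr (p+1) : Bool ⊕ ZMod n) ∈
            ({Sum.inl s, Sum.inr (p-1), Sum.inr (p-1+1)} : Finset (Bool ⊕ ZMod n)) := by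
          rw [← h]; simp
        simp at hm
        rcases hm with hm | hm
        · exact h2 (by linear_combination hm)
        · exact h1 (by linear_combination hm)
      · have hp : p - 1 + 1 = p := by ring
        simp [hp]
  | Sum.inr p, Sum.inr q =>
      obtain ⟨hne', hor⟩ := hadj
      rcases hor with rfl | rfl
      · refine ⟨{Sum.inl true, Sum.inr p, Sum.inr (p+1)},
          {Sum.inl false, Sum.inr p, Sum.inr (p+1)},
          face_mem_bp true p, face_mem_bp false p, ?_, by simp, by simp, by simp, by simp⟩
        intro h
        have hm : (Sum.inl true : Bool ⊕ ZMod n) ∈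
            ({Sum.inl false, Sum.inr p, Sum.inr (p+1)} : Finset (Bool ⊕ ZMod n)) := by
          rw [← h]; simp
        simp at hm
      · refine ⟨{Sum.inl true, Sum.inr q, Sum.inr (q+1)},
          {Sum.inl false, Sum.inr q, Sum.inr (q+1)},
          face_mem_bp true q, face_mem_bp false q, ?_, by simp, by simp, by simp, by simp⟩
        intro h
        have hm : (Sum.inl true : Bool ⊕ ZMod n) ∈
            ({Sum.inl false, Sum.inr q, Sum.inr (q+1)} : Finset (Bool ⊕ ZMod n)) := by
          rw [← h]; simp
        simp at hm

lemma seq_d2 (hn3 : 3 ≤ n) (Z : (bp n).Zigzag) (i : ℤ) : Z.seq (i+2) ≠ Z.seq i := by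
  intro h
  obtain ⟨G₁, G₂, hG₁, hG₂, hne, hx1, hy1, hx2, hy2⟩ := two_faces hn3 _ _ (Z.seq_adj i)
  have sub : ∀ G : Finset (Bool ⊕ ZMod n), Z.seq i ∈ G → Z.seq (i+1) ∈ G →
      ({Z.seq i, Z.seq (i+1), Z.seq (i+2)} : Finset (Bool ⊕ ZMod n)) ⊆ G := by
    intro G hxG hyG
    rw [Finset.insert_subset_iff, Finset.insert_subset_iff, Finset.singleton_subset_iff, h]
    exact ⟨hxG, hyG, hxG⟩
  have e1 := Z.face_unique i G₁ hG₁ (sub _ hx1 hy1)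
  have e2 := Z.face_unique i G₂ hG₂ (sub _ hx2 hy2)
  exact hne (e1.trans e2.symm)

lemma tripleface (hn3 : 3 ≤ n) (Z : (bp n).Zigzag) (i : ℤ) :
    Z.face i = {Z.seq i, Z.seq (i+1), Z.seq (i+2)} := by
  have h1 : (1 : ZMod n) ≠ 0 := one_ne_zero' hn3
  obtain ⟨s, j, hshape⟩ := Z.face_mem i
  have hfcard : (Z.face i).card = 3 := by
    rw [hshape]
    rw [Finset.card_insert_of_notMem (by simp),
      Finset.card_insert_of_notMem (by
        simp
        intro hh
        exact h1 (by linear_combination hh))]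
    rfl
  have hxy : Z.seq i ≠ Z.seq (i+1) := Z.seq_ne i
  have hyz : Z.seq (i+1) ≠ Z.seq (i+2) := by
    have := Z.seq_ne (i+1)
    rwa [show i+1+1 = i+2 by ring] at this
  have hxz : Z.seq i ≠ Z.seq (i+2) := (seq_d2 hn3 Z i).symm
  have htcard : ({Z.seq i, Z.seq (i+1), Z.seq (i+2)} : Finset (Bool ⊕ ZMod n)).card = 3 := by
    rw [Finset.card_insert_of_notMem (by simp [hxy, hxz]),
      Finset.card_insert_of_notMem (by simp [hyz])]
    rfl
  exact (Finset.eq_of_subset_of_card_le (Z.subset_face i) (by rw [hfcard, htcard])).symm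

lemma seq_next_char (hn3 : 3 ≤ n) (Z : (bp n).Zigzag) (i : ℤ) (w : Bool ⊕ ZMod n)
    (hmem : ({Z.seq (i+1), Z.seq (i+2), w} : Finset (Bool ⊕ ZMod n)) ∈ (bp n).faces)
    (hne : ({Z.seq (i+1), Z.seq (i+2), w} : Finset (Bool ⊕ ZMod n)) ≠
      {Z.seq i, Z.seq (i+1), Z.seq (i+2)})
    (hw1 : w ≠ Z.seq (i+1)) (hw2 : w ≠ Z.seq (i+2)) : Z.seq (i+3) = w := by
  have t0 : Z.face i = {Z.seq i, Z.seq (i+1), Z.seq (i+2)} := tripleface hn3 Z i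
  have t1 : Z.face (i+1) = {Z.seq (i+1), Z.seq (i+2), Z.seq (i+3)} := by
    have := tripleface hn3 Z (i+1)
    rwa [show i+1+1 = i+2 by ring, show i+1+2 = i+3 by ring] at this
  have hfe : Z.face (i+1) ≠ Z.face i := (Z.face_ne i).symm
  have hyz : Z.seq (i+1) ≠ Z.seq (i+2) := by
    have := Z.seq_ne (i+1)
    rwa [show i+1+1 = i+2 by ring] at this
  obtain ⟨A, B, hAB⟩ := faces_with_pair hn3 _ _ hyz
  have m0 : Z.face i = A ∨ Z.face i = B :=
    hAB _ (Z.face_mem i) (by rw [t0]; simp) (by rw [t0]; simp)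
  have m1 : Z.face (i+1) = A ∨ Z.face (i+1) = B :=
    hAB _ (Z.face_mem (i+1)) (by rw [t1]; simp) (by rw [t1]; simp)
  have mw : ({Z.seq (i+1), Z.seq (i+2), w} : Finset (Bool ⊕ ZMod n)) = A ∨
      ({Z.seq (i+1), Z.seq (i+2), w} : Finset (Bool ⊕ ZMod n)) = B :=
    hAB _ hmem (by simp) (by simp)
  have hws : ({Z.seq (i+1), Z.seq (i+2), w} : Finset (Bool ⊕ ZMod n)) = Z.face (i+1) := by
    rcases mw with hw | hw
    · have hfiA : Z.face i ≠ A := fun hfi => hne (hw.trans (hfi.symm.trans t0))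
      have hfi : Z.face i = B := m0.resolve_left hfiA
      have hf1 : Z.face (i+1) = A := by
        rcases m1 with h | h
        · exact h
        · exact absurd (h.trans hfi.symm) hfe
      rw [hw, hf1]
    · have hfiB : Z.face i ≠ B := fun hfi => hne (hw.trans (hfi.symm.trans t0))
      have hfi : Z.face i = A := m0.resolve_right hfiB
      have hf1 : Z.face (i+1) = B := by
        rcases m1 with h | h
        · exact absurd (h.trans hfi.symm) hfe
        · exact h
      rw [hw, hf1]
  rw [t1] at hws
  have : w ∈ ({Z.seq (i+1), Z.seq (i+2), Z.seq (i+3)} : Finset (Bool ⊕ ZMod n)) := by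
    rw [← hws]; simp
  simp at this
  rcases this with h | h | h
  · exact absurd h hw1
  · exact absurd h hw2
  · exact h.symm

end BPLemmas2

section BPLemmas3

open PreTriangulation

variable {n : ℕ}

@[simp] lemma phi_inl (s : Bool) : phi n (Sum.inl s) = Sum.inl s := rfl
@[simp] lemma phi_inr (j : ZMod n) : phi n (Sum.inr j) = Sum.inr (-j) := rfl

def pfix (n : ℕ) (u : ℤ) (s : Bool) : ℤ := if decide (u % 2 = 0) = s then u else u + n

lemma pfix_par (hodd : n % 2 = 1) (u : ℤ) (s : Bool) :
    decide ((pfix n u s) % 2 = 0) = s := by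
  unfold pfix
  by_cases h : decide (u % 2 = 0) = s
  · rw [if_pos h]; exact h
  · rw [if_neg h]
    have h2 : (u + (n:ℤ)) % 2 = (u+1) % 2 := by omega
    rw [h2, par_succ]
    cases s <;> simp_all

lemma pfix_dvd (u : ℤ) (s : Bool) : (n:ℤ) ∣ (pfix n u s - u) := by
  unfold pfix
  split
  · simp
  · simp

lemma solve (hn3 : 3 ≤ n) (hodd : n % 2 = 1) (s : Bool) (j : ZMod n) :
    ∃ m : ℤ, decide (m % 2 = 0) = s ∧ ((2*m : ℤ) : ZMod n) = j := by
  obtain ⟨j₀, hj₀⟩ := int_surj hn3 j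
  set u : ℤ := (((n+1)/2 : ℕ) : ℤ) * j₀ with hu
  have hco : (((n+1)/2 : ℕ) : ℤ) * 2 = (n:ℤ) + 1 := by
    have : (n+1)/2 * 2 = n+1 := by omega
    exact_mod_cast congrArg (Nat.cast : ℕ → ℤ) this
  refine ⟨pfix n u s, pfix_par hodd u s, ?_⟩
  obtain ⟨d, hd⟩ := pfix_dvd (n := n) u s
  have hdvd : (n:ℤ) ∣ 2 * pfix n u s - j₀ := by
    refine ⟨j₀ + 2*d, ?_⟩
    have h1 : pfix n u s = u + (n:ℤ)*d := by omega
    rw [h1, hu]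
    linear_combination j₀ * hco
  rw [castEq hdvd, hj₀]

lemma ginj {g : Bool ⊕ ZMod n → Bool ⊕ ZMod n} (hg : g = id ∨ g = phi n) :
    Function.Injective g := by
  rcases hg with rfl | rfl
  · exact fun a b h => h
  · exact phi_inj n

lemma image_triple (f : Bool ⊕ ZMod n → Bool ⊕ ZMod n) (a b c : Bool ⊕ ZMod n) :
    ({f a, f b, f c} : Finset (Bool ⊕ ZMod n)) = Finset.image f {a, b, c} := by
  simp [Finset.image_insert]

lemma gface (hn3 : 3 ≤ n) {g : Bool ⊕ ZMod n → Bool ⊕ ZMod n}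
    (hg : g = id ∨ g = phi n) (i : ℤ) :
    ({g (zig n i), g (zig n (i+1)), g (zig n (i+2))} : Finset (Bool ⊕ ZMod n)) ∈
      (bp n).faces := by
  obtain ⟨s, j, hj⟩ := zig_face hn3 i
  rcases hg with rfl | rfl
  · simp only [id_eq]
    rw [hj]
    exact face_mem_bp s j
  · rw [image_triple, hj, ← image_triple]
    simp only [phi_inl, phi_inr]
    refine ⟨s, -(j+1), ?_⟩
    have h1 : -(j+1)+1 = -j := by ring
    have h2 : -(j+1) = -j-1 := by ring
    rw [h1, h2]
    ext a
    simp
    tauto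

lemma gtne (hn3 : 3 ≤ n) {g : Bool ⊕ ZMod n → Bool ⊕ ZMod n}
    (hg : g = id ∨ g = phi n) (i : ℤ) :
    ({g (zig n (i+1)), g (zig n (i+2)), g (zig n (i+3))} : Finset (Bool ⊕ ZMod n)) ≠
      {g (zig n i), g (zig n (i+1)), g (zig n (i+2))} := by
  intro h
  apply zig_tne hn3 i
  rw [image_triple, image_triple] at h
  exact Finset.image_injective (ginj hg) h

lemma gface' (hn3 : 3 ≤ n) {g : Bool ⊕ ZMod n → Bool ⊕ ZMod n}
    (hg : g = id ∨ g = phi n) (a t : ℤ) :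
    ({g (zig n (a+1+t)), g (zig n (a+2+t)), g (zig n (a+3+t))} : Finset (Bool ⊕ ZMod n)) ∈
      (bp n).faces := by
  have := gface hn3 hg (a+1+t)
  rwa [show a+1+t+1 = a+2+t by ring, show a+1+t+2 = a+3+t by ring] at this

lemma gtne' (hn3 : 3 ≤ n) {g : Bool ⊕ ZMod n → Bool ⊕ ZMod n}
    (hg : g = id ∨ g = phi n) (a t : ℤ) :
    ({g (zig n (a+1+t)), g (zig n (a+2+t)), g (zig n (a+3+t))} : Finset (Bool ⊕ ZMod n)) ≠
      {g (zig n (a+t)), g (zig n (a+1+t)), g (zig n (a+2+t))} := by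
  have := gtne hn3 hg (a+t)
  rwa [show a+t+1 = a+1+t by ring, show a+t+2 = a+2+t by ring, show a+t+3 = a+3+t by ring]
    at this

lemma extend_match (hn3 : 3 ≤ n) (Z : (bp n).Zigzag) (t : ℤ)
    {g : Bool ⊕ ZMod n → Bool ⊕ ZMod n} (hg : g = id ∨ g = phi n)
    (h0 : Z.seq 0 = g (zig n (0 + t))) (h1 : Z.seq 1 = g (zig n (1 + t)))
    (h2 : Z.seq 2 = g (zig n (2 + t))) :
    ∀ i : ℤ, Z.seq i = g (zig n (i + t)) := by
  have hinj := ginj hg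
  have hfwd : ∀ m : ℕ, Z.seq m = g (zig n ((m:ℤ) + t)) ∧
      Z.seq ((m:ℤ)+1) = g (zig n ((m:ℤ)+1+t)) ∧
      Z.seq ((m:ℤ)+2) = g (zig n ((m:ℤ)+2+t)) := by
    intro m
    induction m with
    | zero =>
        refine ⟨by simpa using h0, ?_, ?_⟩
        · have := h1
          rw [show (1:ℤ) + t = (0:ℤ)+1+t by ring] at this
          simpa using this
        · have := h2
          rw [show (2:ℤ) + t = (0:ℤ)+2+t by ring] at this
          simpa using this
    | succ m ih =>
        obtain ⟨e0, e1, e2⟩ := ih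
        have key : Z.seq ((m:ℤ)+3) = g (zig n ((m:ℤ)+3+t)) := by
          apply seq_next_char hn3 Z (m:ℤ)
          · rw [e1, e2]
            exact gface' hn3 hg (m:ℤ) t
          · rw [e0, e1, e2]
            exact gtne' hn3 hg (m:ℤ) t
          · rw [e1]
            intro hcon
            have := hinj hcon
            have h' := zig_d2 hn3 ((m:ℤ)+1+t)
            rw [show (m:ℤ)+1+t+2 = (m:ℤ)+3+t by ring] at h'
            exact h' this
          · rw [e2]
            intro hcon
            have := hinj hcon
            have h' := zig_d1 hn3 ((m:ℤ)+2+t)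
            rw [show (m:ℤ)+2+t+1 = (m:ℤ)+3+t by ring] at h'
            exact h' this
        refine ⟨?_, ?_, ?_⟩
        · have : ((m+1:ℕ):ℤ) = (m:ℤ)+1 := by push_cast; ring
          rw [this]; exact e1
        · have : ((m+1:ℕ):ℤ)+1 = (m:ℤ)+2 := by push_cast; ring
          rw [this, show (m:ℤ)+2+t = (m:ℤ)+2+t from rfl]; exact e2
        · have h3 : ((m+1:ℕ):ℤ)+2 = (m:ℤ)+3 := by push_cast; ring
          rw [h3]; exact key
  have hper6 : ∀ (x : ℤ) (c : ℕ), zig n (x + (6*n*c : ℕ)) = zig n x := by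
    intro x c
    induction c with
    | zero => simp
    | succ c ih =>
        have : x + ((6*n*(c+1) : ℕ) : ℤ) = (x + (6*n*c : ℕ)) + 6*(n:ℤ) := by push_cast; ring
        rw [this, zig_period, ih]
  have hZper : ∀ (x : ℤ) (c : ℕ), Z.seq (x + (Z.n * c : ℕ)) = Z.seq x := by
    intro x c
    induction c with
    | zero => simp
    | succ c ih =>
        have : x + ((Z.n*(c+1) : ℕ) : ℤ) = (x + (Z.n*c : ℕ)) + Z.n := by push_cast; ring
        rw [this, Z.periodic, ih]
  intro i
  have hZn4 : 4 ≤ Z.n := Z.three_lt_n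
  set c : ℕ := i.natAbs + 1 with hc
  set M : ℕ := Z.n * ((6*n) * c) with hM
  have hcM : c ≤ M := by
    calc c = 1 * c := (one_mul c).symm
    _ ≤ (Z.n * (6*n)) * c := Nat.mul_le_mul_right c (by
        have : 1 ≤ Z.n := by omega
        have : 1 ≤ 6*n := by omega
        nlinarith)
    _ = M := by rw [hM]; ring
  have hpos : 0 ≤ i + (M:ℤ) := by omega
  have hm : i + (M:ℤ) = (((i + (M:ℤ)).toNat : ℕ) : ℤ) := (Int.toNat_of_nonneg hpos).symm
  calc Z.seq i = Z.seq (i + (M:ℤ)) := by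
        have := hZper i ((6*n)*c)
        rw [← hM] at this
        exact this.symm
    _ = Z.seq (((i + (M:ℤ)).toNat : ℕ) : ℤ) := by rw [← hm]
    _ = g (zig n ((((i + (M:ℤ)).toNat : ℕ) : ℤ) + t)) := (hfwd _).1
    _ = g (zig n (i + (M:ℤ) + t)) := by rw [← hm]
    _ = g (zig n (i + t)) := by
        congr 1
        have harr : i + (M:ℤ) + t = (i + t) + ((6*n*(Z.n*c) : ℕ) : ℤ) := by
          rw [hM]; push_cast; ring
        rw [harr, hper6]

end BPLemmas3

section BPClassify

open PreTriangulation

variable {n : ℕ}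

lemma classify (hn3 : 3 ≤ n) (hodd : n % 2 = 1) (Z : (bp n).Zigzag) :
    ∃ (t : ℤ) (g : Bool ⊕ ZMod n → Bool ⊕ ZMod n), (g = id ∨ g = phi n) ∧
      (∀ i, Z.seq i = g (zig n (i + t))) ∧ Z.n = 6*n := by
  have c1 : ∀ m : ℤ, ((2*m+1:ℤ) : ZMod n) = ((2*m:ℤ) : ZMod n) + 1 := by
    intro m; push_cast; ring
  have c2 : ∀ m : ℤ, ((2*(m+1):ℤ) : ZMod n) = ((2*m:ℤ) : ZMod n) + 2 := by
    intro m; push_cast; ring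
  have main : ∃ (t : ℤ) (g : Bool ⊕ ZMod n → Bool ⊕ ZMod n), (g = id ∨ g = phi n) ∧
      (∀ i, Z.seq i = g (zig n (i + t))) := by
    have t0 : Z.face 0 = {Z.seq 0, Z.seq 1, Z.seq 2} := by
      have := tripleface hn3 Z 0
      norm_num at this
      exact this
    obtain ⟨s, j, hshape⟩ := Z.face_mem 0
    rw [t0] at hshape
    have hxy : Z.seq 0 ≠ Z.seq 1 := by have := Z.seq_ne 0; norm_num at this; exact this
    have hyz : Z.seq 1 ≠ Z.seq 2 := by have := Z.seq_ne 1; norm_num at this; exact this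
    have hxz : Z.seq 0 ≠ Z.seq 2 := by
      have := (seq_d2 hn3 Z 0).symm; norm_num at this; exact this
    have hx : Z.seq 0 = Sum.inl s ∨ Z.seq 0 = Sum.inr j ∨ Z.seq 0 = Sum.inr (j+1) := by
      have : Z.seq 0 ∈ ({Sum.inl s, Sum.inr j, Sum.inr (j+1)} : Finset (Bool ⊕ ZMod n)) := by
        rw [← hshape]; simp
      simpa using this
    have hy : Z.seq 1 = Sum.inl s ∨ Z.seq 1 = Sum.inr j ∨ Z.seq 1 = Sum.inr (j+1) := by
      have : Z.seq 1 ∈ ({Sum.inl s, Sum.inr j, Sum.inr (j+1)} : Finset (Bool ⊕ ZMod n)) := by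
        rw [← hshape]; simp
      simpa using this
    have hz : Z.seq 2 = Sum.inl s ∨ Z.seq 2 = Sum.inr j ∨ Z.seq 2 = Sum.inr (j+1) := by
      have : Z.seq 2 ∈ ({Sum.inl s, Sum.inr j, Sum.inr (j+1)} : Finset (Bool ⊕ ZMod n)) := by
        rw [← hshape]; simp
      simpa using this
    have hls : Sum.inl s = Z.seq 0 ∨ Sum.inl s = Z.seq 1 ∨ Sum.inl s = Z.seq 2 := by
      have : (Sum.inl s : Bool ⊕ ZMod n) ∈ ({Z.seq 0, Z.seq 1, Z.seq 2} : Finset (Bool ⊕ ZMod n)) := by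
        rw [hshape]; simp
      simpa using this
    rcases hx with hx0 | hx0 | hx0
    · rcases hy with hy1 | hy1 | hy1
      · exact absurd (hx0.trans hy1.symm) hxy
      · rcases hz with hz2 | hz2 | hz2
        · exact absurd (hx0.trans hz2.symm) hxz
        · exact absurd (hy1.trans hz2.symm) hyz
        · -- case 1 : (inl s, inr j, inr (j+1)), g = id, t = 3m
          obtain ⟨m, hpar, hcast⟩ := solve hn3 hodd s j
          refine ⟨3*m, id, Or.inl rfl, extend_match hn3 Z (3*m) (Or.inl rfl) ?_ ?_ ?_⟩
          · rw [show (0:ℤ)+3*m = 3*m by ring, zig_val0, hpar, hx0]; rfl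
          · rw [show (1:ℤ)+3*m = 3*m+1 by ring, zig_val1, hcast, hy1]; rfl
          · rw [show (2:ℤ)+3*m = 3*m+2 by ring, zig_val2, hz2, c1 m, hcast]; rfl
      · rcases hz with hz2 | hz2 | hz2
        · exact absurd (hx0.trans hz2.symm) hxz
        · -- case 2 : (inl s, inr (j+1), inr j), g = phi, t = 3m
          obtain ⟨m, hpar, hcast⟩ := solve hn3 hodd s (-(j+1))
          refine ⟨3*m, phi n, Or.inr rfl, extend_match hn3 Z (3*m) (Or.inr rfl) ?_ ?_ ?_⟩
          · rw [show (0:ℤ)+3*m = 3*m by ring, zig_val0, hpar, hx0]; rfl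
          · rw [show (1:ℤ)+3*m = 3*m+1 by ring, zig_val1, hcast, hy1, phi_inr,
              show -(-(j+1)) = j+1 from by ring]
          · rw [show (2:ℤ)+3*m = 3*m+2 by ring, zig_val2, hz2, c1 m, hcast, phi_inr,
              show -(-(j+1)+1) = j from by ring]
        · exact absurd (hy1.trans hz2.symm) hyz
    · rcases hls with hl | hl | hl
      · rw [hx0] at hl; simp at hl
      · have hy1 : Z.seq 1 = Sum.inl s := hl.symm
        rcases hz with hz2 | hz2 | hz2
        · exact absurd (hy1.trans hz2.symm) hyz
        · exact absurd (hx0.trans hz2.symm) hxz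
        · -- case 3 : (inr j, inl s, inr (j+1)), g = id, t = 3m+2
          obtain ⟨m, hpar, hcast⟩ := solve hn3 hodd (!s) (j-1)
          have hps : decide ((m+1) % 2 = 0) = s := by rw [par_succ, hpar, Bool.not_not]
          refine ⟨3*m+2, id, Or.inl rfl, extend_match hn3 Z (3*m+2) (Or.inl rfl) ?_ ?_ ?_⟩
          · rw [show (0:ℤ)+(3*m+2) = 3*m+2 by ring, zig_val2, hx0, c1 m, hcast,
              show (j:ZMod n) - 1 + 1 = j from by ring]; rfl
          · rw [show (1:ℤ)+(3*m+2) = 3*(m+1) by ring, zig_val0, hps, hy1]; rfl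
          · rw [show (2:ℤ)+(3*m+2) = 3*(m+1)+1 by ring, zig_val1, hz2, c2 m, hcast,
              show (j:ZMod n) - 1 + 2 = j + 1 from by ring]; rfl
      · have hz2 : Z.seq 2 = Sum.inl s := hl.symm
        rcases hy with hy1 | hy1 | hy1
        · exact absurd (hy1.trans hz2.symm) hyz
        · exact absurd (hx0.trans hy1.symm) hxy
        · -- case 5 : (inr j, inr (j+1), inl s), g = id, t = 3m+1
          obtain ⟨m, hpar, hcast⟩ := solve hn3 hodd (!s) j
          have hps : decide ((m+1) % 2 = 0) = s := by rw [par_succ, hpar, Bool.not_not]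
          refine ⟨3*m+1, id, Or.inl rfl, extend_match hn3 Z (3*m+1) (Or.inl rfl) ?_ ?_ ?_⟩
          · rw [show (0:ℤ)+(3*m+1) = 3*m+1 by ring, zig_val1, hcast, hx0]; rfl
          · rw [show (1:ℤ)+(3*m+1) = 3*m+2 by ring, zig_val2, hy1, c1 m, hcast]; rfl
          · rw [show (2:ℤ)+(3*m+1) = 3*(m+1) by ring, zig_val0, hps, hz2]; rfl
    · rcases hls with hl | hl | hl
      · rw [hx0] at hl; simp at hl
      · have hy1 : Z.seq 1 = Sum.inl s := hl.symm
        rcases hz with hz2 | hz2 | hz2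
        · exact absurd (hy1.trans hz2.symm) hyz
        · -- case 4 : (inr (j+1), inl s, inr j), g = phi, t = 3m+2
          obtain ⟨m, hpar, hcast⟩ := solve hn3 hodd (!s) (-(j+2))
          have hps : decide ((m+1) % 2 = 0) = s := by rw [par_succ, hpar, Bool.not_not]
          refine ⟨3*m+2, phi n, Or.inr rfl, extend_match hn3 Z (3*m+2) (Or.inr rfl) ?_ ?_ ?_⟩
          · rw [show (0:ℤ)+(3*m+2) = 3*m+2 by ring, zig_val2, hx0, c1 m, hcast, phi_inr,
              show -(-(j+2)+1) = j+1 from by ring]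
          · rw [show (1:ℤ)+(3*m+2) = 3*(m+1) by ring, zig_val0, hps, hy1]; rfl
          · rw [show (2:ℤ)+(3*m+2) = 3*(m+1)+1 by ring, zig_val1, hz2, c2 m, hcast, phi_inr,
              show -(-(j+2)+2) = j from by ring]
        · exact absurd (hx0.trans hz2.symm) hxz
      · have hz2 : Z.seq 2 = Sum.inl s := hl.symm
        rcases hy with hy1 | hy1 | hy1
        · exact absurd (hy1.trans hz2.symm) hyz
        · -- case 6 : (inr (j+1), inr j, inl s), g = phi, t = 3m+1
          obtain ⟨m, hpar, hcast⟩ := solve hn3 hodd (!s) (-(j+1))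
          have hps : decide ((m+1) % 2 = 0) = s := by rw [par_succ, hpar, Bool.not_not]
          refine ⟨3*m+1, phi n, Or.inr rfl, extend_match hn3 Z (3*m+1) (Or.inr rfl) ?_ ?_ ?_⟩
          · rw [show (0:ℤ)+(3*m+1) = 3*m+1 by ring, zig_val1, hcast, hx0, phi_inr,
              show -(-(j+1)) = j+1 from by ring]
          · rw [show (1:ℤ)+(3*m+1) = 3*m+2 by ring, zig_val2, hy1, c1 m, hcast, phi_inr,
              show -(-(j+1)+1) = j from by ring]
          · rw [show (2:ℤ)+(3*m+1) = 3*(m+1) by ring, zig_val0, hps, hz2]; rfl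
        · exact absurd (hx0.trans hy1.symm) hxy
  obtain ⟨t, g, hg, hseq⟩ := main
  have hinj := ginj hg
  refine ⟨t, g, hg, hseq, ?_⟩
  have hle : Z.n ≤ 6*n := by
    apply Z.n_minimal (6*n) (by omega)
    intro i
    rw [hseq, hseq, show i + ((6*n:ℕ):ℤ) + t = (i + t) + 6*(n:ℤ) by push_cast; ring, zig_period]
  have hge : 6*n ≤ Z.n := by
    apply zig_min_period hn3 hodd Z.n (by have := Z.three_lt_n; omega)
    intro i
    have h := Z.periodic (i - t)
    rw [hseq, hseq] at h
    have := hinj h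
    rwa [show i - t + (Z.n:ℤ) + t = i + Z.n by ring, show i - t + t = i by ring] at this
  omega

end BPClassify

section BPAssemble

open PreTriangulation

lemma assemble {n : ℕ} (k : ℕ) (hn : n = 2*k+1) (hk : 1 ≤ k) (Z : (bp n).Zigzag)
    (t : ℤ) {g : Bool ⊕ ZMod n → Bool ⊕ ZMod n} (hg : g = id ∨ g = phi n)
    (hseq : ∀ i, Z.seq i = g (zig n (i + t))) (hZn : Z.n = 6*n)
    (s : Bool) (c' : ZMod n) (F : Finset (Bool ⊕ ZMod n))
    (hF : F = {Sum.inl s, g (Sum.inr c'), g (Sum.inr (c'+1))}) :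
    (k % 2 = 1 → Z.Is112OddFace F) ∧ (k % 2 = 0 → Z.Is112EvenFace F) := by
  have hn3 : 3 ≤ n := by omega
  have hodd : n % 2 = 1 := by omega
  have hinj := ginj hg
  have hginl : ∀ s' : Bool, g (Sum.inl s') = Sum.inl s' := by
    rcases hg with rfl | rfl <;> intro s' <;> rfl
  have hginr : ∀ p : ZMod n, ∃ p', g (Sum.inr p) = Sum.inr p' := by
    rcases hg with rfl | rfl
    · exact fun p => ⟨p, rfl⟩
    · exact fun p => ⟨-p, rfl⟩
  have hg1 : ∀ (i : ℤ) (s' : Bool), Z.seq i = Sum.inl s' → zig n (i+t) = Sum.inl s' := by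
    intro i s' h
    rw [hseq] at h
    cases hz : zig n (i+t) with
    | inl s'' => rw [hz, hginl] at h; exact h
    | inr p =>
        obtain ⟨p', hp'⟩ := hginr p
        rw [hz, hp'] at h
        exact absurd h (by simp)
  have hg2 : ∀ (i : ℤ) (p : ZMod n), Z.seq i = g (Sum.inr p) → zig n (i+t) = Sum.inr p := by
    intro i p h
    rw [hseq] at h
    exact hinj h
  have hseq' : ∀ a : ℤ, Z.seq (a - t) = g (zig n a) := by
    intro a; rw [hseq, show a - t + t = a by ring]
  obtain ⟨mA, hparA, key0⟩ := solve hn3 hodd s c'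
  have key1 : ((2*mA+1 : ℤ) : ZMod n) = c' + 1 := by
    have h : ((2*mA+1:ℤ) : ZMod n) = ((2*mA:ℤ) : ZMod n) + 1 := by push_cast; ring
    rw [h, key0]
  have keyC0 : ((2*(mA+(n:ℤ)) : ℤ) : ZMod n) = c' := by
    rw [castEq (a := 2*(mA+(n:ℤ))) (b := 2*mA) ⟨2, by ring⟩, key0]
  have keyC1 : ((2*(mA+(n:ℤ))+1 : ℤ) : ZMod n) = c' + 1 := by
    rw [castEq (a := 2*(mA+(n:ℤ))+1) (b := 2*mA+1) ⟨2, by ring⟩, key1]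
  have keyB0 : ((2*(mA+(k:ℤ))+1 : ℤ) : ZMod n) = c' := by
    rw [castEq (a := 2*(mA+(k:ℤ))+1) (b := 2*mA) ⟨1, by push_cast [hn]; ring⟩, key0]
  have keyB1 : ((2*(mA+(k:ℤ)+1) : ℤ) : ZMod n) = c' + 1 := by
    rw [castEq (a := 2*(mA+(k:ℤ)+1)) (b := 2*mA+1) ⟨1, by push_cast [hn]; ring⟩, key1]
  have keyE0 : ((2*(mA+(k:ℤ)+(n:ℤ))+1 : ℤ) : ZMod n) = c' := by
    rw [castEq (a := 2*(mA+(k:ℤ)+(n:ℤ))+1) (b := 2*mA) ⟨3, by push_cast [hn]; ring⟩, key0]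
  have keyE1 : ((2*(mA+(k:ℤ)+(n:ℤ)+1) : ℤ) : ZMod n) = c' + 1 := by
    rw [castEq (a := 2*(mA+(k:ℤ)+(n:ℤ)+1)) (b := 2*mA+1) ⟨3, by push_cast [hn]; ring⟩, key1]
  have hparC : decide ((mA + (n:ℤ) + 1) % 2 = 0) = s := by
    have h : (mA + (n:ℤ) + 1) % 2 = mA % 2 := by omega
    rw [h]; exact hparA
  have hone : (1 : ZMod n) ≠ 0 := one_ne_zero' hn3
  have hcne : c' ≠ c' + 1 := fun h => hone (left_eq_add.mp h)
  have hxy : (Sum.inl s : Bool ⊕ ZMod n) ≠ g (Sum.inr c') := by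
    obtain ⟨p', hp'⟩ := hginr c'; rw [hp']; simp
  have hxz : (Sum.inl s : Bool ⊕ ZMod n) ≠ g (Sum.inr (c'+1)) := by
    obtain ⟨p', hp'⟩ := hginr (c'+1); rw [hp']; simp
  have hyzg : g (Sum.inr c') ≠ g (Sum.inr (c'+1)) := fun h => hcne (Sum.inr.inj (hinj h))
  have hPT : Z.PassesTwice (g (Sum.inr c')) (g (Sum.inr (c'+1))) := by
    refine ⟨3*mA+1 - t, 3*(mA+(n:ℤ))+1 - t, ?_, ?_, ?_, ?_, ?_⟩
    · rw [hZn]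
      intro h
      have hd := castExtract (n := 6*n) h
      rw [show (3*mA+1-t) - (3*(mA+(n:ℤ))+1-t) = -(3*(n:ℤ)) by ring] at hd
      have hd2 := dvd_neg.mp hd
      have := Int.le_of_dvd (by push_cast; omega) hd2
      push_cast at this
      omega
    · rw [hseq' (3*mA+1), zig_val1, key0]
    · rw [show 3*mA+1-t+1 = 3*mA+2 - t by ring, hseq' (3*mA+2), zig_val2, key1]
    · rw [hseq' (3*(mA+(n:ℤ))+1), zig_val1, keyC0]
    · rw [show 3*(mA+(n:ℤ))+1-t+1 = 3*(mA+(n:ℤ))+2 - t by ring,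
        hseq' (3*(mA+(n:ℤ))+2), zig_val2, keyC1]
  have hNx : ∀ p : ZMod n, ¬ Z.SecondTypeEdge (Sum.inl s) (g (Sum.inr p)) := by
    intro p h
    rcases h with ⟨a, b, hab, h1, h2, h3, h4⟩ | ⟨a, b, hab, h1, h2, h3, h4⟩
    · have z1 := hg1 a s h1
      have z2 := hg2 (a+1) p h2
      have z3 := hg1 b s h3
      have z4 := hg2 (b+1) p h4
      rw [show a+1+t = (a+t)+1 by ring] at z2
      rw [show b+1+t = (b+t)+1 by ring] at z4
      have hd := U1 hodd z1 z2 z3 z4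
      apply hab
      rw [hZn]
      apply castEq
      rw [show (a+t) - (b+t) = a - b by ring] at hd
      push_cast
      exact hd
    · have z1 := hg2 a p h1
      have z2 := hg1 (a+1) s h2
      have z3 := hg2 b p h3
      have z4 := hg1 (b+1) s h4
      rw [show a+1+t = (a+t)+1 by ring] at z2
      rw [show b+1+t = (b+t)+1 by ring] at z4
      have hd := U2 hodd z1 z2 z3 z4
      apply hab
      rw [hZn]
      apply castEq
      rw [show (a+t) - (b+t) = a - b by ring] at hd
      push_cast
      exact hd
  constructor
  · intro hko
    refine ⟨Sum.inl s, g (Sum.inr c'), g (Sum.inr (c'+1)), hF, hxy, hxz, hyzg,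
      Or.inl hPT, hNx c', hNx (c'+1), hPT, ?_⟩
    refine ⟨3*mA - t, 3*k+2, 3*n+1, by omega, by omega, by rw [hZn]; omega,
      ⟨?_, ?_, ?_⟩, ⟨?_, ?_, ?_⟩, ⟨?_, ?_, ?_⟩⟩
    · rw [hseq' (3*mA), zig_val0, hparA, hginl]
    · rw [show 3*mA - t + 1 = 3*mA+1 - t by ring, hseq' (3*mA+1), zig_val1, key0]
    · rw [show 3*mA - t + 2 = 3*mA+2 - t by ring, hseq' (3*mA+2), zig_val2, key1]
    · rw [show 3*mA - t + ((3*k+2 : ℕ):ℤ) = 3*(mA+(k:ℤ))+2 - t by push_cast; ring,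
        hseq' (3*(mA+(k:ℤ))+2), zig_val2, keyB0]
    · rw [show 3*mA - t + ((3*k+2 : ℕ):ℤ) + 1 = 3*(mA+(k:ℤ)+1) - t by push_cast; ring,
        hseq' (3*(mA+(k:ℤ)+1)), zig_val0,
        show (mA+(k:ℤ)+1) % 2 = mA % 2 by omega, hparA, hginl]
    · rw [show 3*mA - t + ((3*k+2 : ℕ):ℤ) + 2 = 3*(mA+(k:ℤ)+1)+1 - t by push_cast; ring,
        hseq' (3*(mA+(k:ℤ)+1)+1), zig_val1, keyB1]
    · rw [show 3*mA - t + ((3*n+1 : ℕ):ℤ) = 3*(mA+(n:ℤ))+1 - t by push_cast; ring,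
        hseq' (3*(mA+(n:ℤ))+1), zig_val1, keyC0]
    · rw [show 3*mA - t + ((3*n+1 : ℕ):ℤ) + 1 = 3*(mA+(n:ℤ))+2 - t by push_cast; ring,
        hseq' (3*(mA+(n:ℤ))+2), zig_val2, keyC1]
    · rw [show 3*mA - t + ((3*n+1 : ℕ):ℤ) + 2 = 3*(mA+(n:ℤ)+1) - t by push_cast; ring,
        hseq' (3*(mA+(n:ℤ)+1)), zig_val0,
        show (mA+(n:ℤ)+1) % 2 = mA % 2 by omega, hparA, hginl]
  · intro hke
    refine ⟨Sum.inl s, g (Sum.inr c'), g (Sum.inr (c'+1)), hF, hxy, hxz, hyzg,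
      Or.inl hPT, hNx c', hNx (c'+1), hPT, ?_⟩
    refine ⟨3*mA - t, 3*n+1, 3*k+3*n+2, by omega, by omega, by rw [hZn]; omega,
      ⟨?_, ?_, ?_⟩, ⟨?_, ?_, ?_⟩, ⟨?_, ?_, ?_⟩⟩
    · rw [hseq' (3*mA), zig_val0, hparA, hginl]
    · rw [show 3*mA - t + 1 = 3*mA+1 - t by ring, hseq' (3*mA+1), zig_val1, key0]
    · rw [show 3*mA - t + 2 = 3*mA+2 - t by ring, hseq' (3*mA+2), zig_val2, key1]
    · rw [show 3*mA - t + ((3*n+1 : ℕ):ℤ) = 3*(mA+(n:ℤ))+1 - t by push_cast; ring,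
        hseq' (3*(mA+(n:ℤ))+1), zig_val1, keyC0]
    · rw [show 3*mA - t + ((3*n+1 : ℕ):ℤ) + 1 = 3*(mA+(n:ℤ))+2 - t by push_cast; ring,
        hseq' (3*(mA+(n:ℤ))+2), zig_val2, keyC1]
    · rw [show 3*mA - t + ((3*n+1 : ℕ):ℤ) + 2 = 3*(mA+(n:ℤ)+1) - t by push_cast; ring,
        hseq' (3*(mA+(n:ℤ)+1)), zig_val0,
        show (mA+(n:ℤ)+1) % 2 = mA % 2 by omega, hparA, hginl]
    · rw [show 3*mA - t + ((3*k+3*n+2 : ℕ):ℤ) = 3*(mA+(k:ℤ)+(n:ℤ))+2 - t by push_cast; ring,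
        hseq' (3*(mA+(k:ℤ)+(n:ℤ))+2), zig_val2, keyE0]
    · rw [show 3*mA - t + ((3*k+3*n+2 : ℕ):ℤ) + 1 = 3*(mA+(k:ℤ)+(n:ℤ)+1) - t by push_cast; ring,
        hseq' (3*(mA+(k:ℤ)+(n:ℤ)+1)), zig_val0,
        show (mA+(k:ℤ)+(n:ℤ)+1) % 2 = mA % 2 by omega, hparA, hginl]
    · rw [show 3*mA - t + ((3*k+3*n+2 : ℕ):ℤ) + 2 = 3*(mA+(k:ℤ)+(n:ℤ)+1)+1 - t by push_cast; ring,
        hseq' (3*(mA+(k:ℤ)+(n:ℤ)+1)+1), zig_val1, keyE1]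

end BPAssemble

end BPAux

theorem statement_7 (k : ℕ) (hk : 1 ≤ k) :
    (Odd k → ∀ Z : (bp (2 * k + 1)).Zigzag,
      ∀ F ∈ (bp (2 * k + 1)).faces, Z.Is112OddFace F) ∧
    (Even k → ∀ Z : (bp (2 * k + 1)).Zigzag,
      ∀ F ∈ (bp (2 * k + 1)).faces, Z.Is112EvenFace F) := by
  have hn3 : 3 ≤ 2*k+1 := by omega
  have hodd : (2*k+1) % 2 = 1 := by omega
  have main : ∀ Z : (bp (2 * k + 1)).Zigzag, ∀ F ∈ (bp (2 * k + 1)).faces,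
      (k % 2 = 1 → Z.Is112OddFace F) ∧ (k % 2 = 0 → Z.Is112EvenFace F) := by
    intro Z F hF
    obtain ⟨t, g, hg, hseq, hZn⟩ := BPAux.classify hn3 hodd Z
    obtain ⟨s, c, rfl⟩ := hF
    rcases hg with rfl | rfl
    · exact BPAux.assemble k rfl hk Z t (Or.inl rfl) hseq hZn s c _ rfl
    · refine BPAux.assemble k rfl hk Z t (Or.inr rfl) hseq hZn s (-(c+1)) _ ?_
      rw [BPAux.phi_inr, BPAux.phi_inr, show -(-(c+1)) = c+1 from by ring,
        show -(-(c+1)+1) = c from by ring]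
      ext a
      simp
      tauto
  constructor
  · intro hko Z F hF
    exact (main Z F hF).1 (Nat.odd_iff.mp hko)
  · intro hke Z F hF
    exact (main Z F hF).2 (Nat.even_iff.mp hke)
end
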